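/- arXiv:2011.11209 — 7 statements merged into one kernel-verified Lean document; each statement's English description precedes it below -/
import Mathlib

section
/- Let B×_f F be a (possibly degenerate) warped product of singular semi-Riemannian manifolds (B,g_B) and (F,g_F) with warping function f ∈ C^∞(B), let X,Y,Z be vector fields on B and U,V,W vector fields on F (identified with their lifts), and let P be a vector field on B. Let K̄ be the semi-symmetric metric Koszul form of B×_f F with respect to P, K̄_B that of (B,g_B) with respect to P, and K_F the Koszul form of (F,g_F). Then: (1) K̄(X,Y,Z) = K̄_B(X,Y,Z); (2) K̄(X,Y,W) = K̄(X,W,Y) = K̄(W,X,Y) = 0; (3) K̄(X,V,W) = f·g_F(V,W)·X(f); (4) K̄(V,X,W) = −K̄(V,W,X) = f·g_F(V,W)·X(f) + f²·g_B(X,P)·g_F(V,W); (5) K̄(U,V,W) = f²·K_F(U,V,W). -/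
noncomputable section

/-!
An algebraic (Koszul-style) model of singular semi-Riemannian manifolds, following
Stoica's "singular semi-Riemannian geometry".

* `M` is the set of points of the smooth manifold;
* `T p` is the tangent space at `p : M`;
* `IsFn h` says that `h : M → ℝ` is a smooth function, i.e. `h ∈ C^∞(M)`;
* `IsVF X` says that the section `X : ∀ p, T p` of the tangent bundle is a smooth
  vector field, i.e. `X ∈ Γ(TM)`;
* `D X h` is the derivative `X(h)` of the smooth function `h` along `X`;
* `bracket X Y` is the Lie bracket `[X,Y]` of vector fields;
* `g` is the metric: a smooth symmetric bilinear form on the tangent bundle, which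
  may be degenerate and of variable signature.
-/
structure SSRM (M : Type*) (T : M → Type*)
    [∀ p, AddCommGroup (T p)] [∀ p, Module ℝ (T p)] where
  /-- the smooth real functions `C^∞(M)` -/
  IsFn : (M → ℝ) → Prop
  /-- the smooth vector fields `Γ(TM)` -/
  IsVF : (∀ p, T p) → Prop
  /-- the directional derivative `X(h)` of a function along a vector field -/
  D : (∀ p, T p) → (M → ℝ) → M → ℝ
  /-- the Lie bracket of vector fields -/
  bracket : (∀ p, T p) → (∀ p, T p) → ∀ p, T p
  /-- the (possibly degenerate) metric, pointwise a bilinear form -/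
  g : ∀ p, T p →ₗ[ℝ] T p →ₗ[ℝ] ℝ
  g_symm : ∀ p u v, g p u v = g p v u
  fn_const : ∀ c : ℝ, IsFn fun _ => c
  fn_add : ∀ a b, IsFn a → IsFn b → IsFn (a + b)
  fn_mul : ∀ a b, IsFn a → IsFn b → IsFn (a * b)
  vf_add : ∀ X Y, IsVF X → IsVF Y → IsVF (X + Y)
  vf_smul : ∀ a X, IsFn a → IsVF X → IsVF fun p => a p • X p
  vf_smulR : ∀ (r : ℝ) X, IsVF X → IsVF (r • X)
  g_smooth : ∀ X Y, IsVF X → IsVF Y → IsFn fun p => g p (X p) (Y p)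
  D_smooth : ∀ X a, IsVF X → IsFn a → IsFn (D X a)
  D_add_fn : ∀ X a b, IsVF X → IsFn a → IsFn b → D X (a + b) = D X a + D X b
  D_mul_fn : ∀ X a b, IsVF X → IsFn a → IsFn b → D X (a * b) = D X a * b + a * D X b
  D_const : ∀ X (c : ℝ), IsVF X → D X (fun _ => c) = 0
  D_add_vf : ∀ X Y a, IsVF X → IsVF Y → IsFn a → D (X + Y) a = D X a + D Y a
  D_smul_vf : ∀ b X a, IsFn b → IsVF X → IsFn a →
    D (fun p => b p • X p) a = b * D X a
  bracket_smooth : ∀ X Y, IsVF X → IsVF Y → IsVF (bracket X Y)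
  bracket_antisymm : ∀ X Y, IsVF X → IsVF Y → bracket X Y = -bracket Y X
  bracket_add_left : ∀ X Y Z, IsVF X → IsVF Y → IsVF Z →
    bracket (X + Y) Z = bracket X Z + bracket Y Z
  bracket_leibniz : ∀ X a Y, IsVF X → IsFn a → IsVF Y →
    bracket X (fun p => a p • Y p)
      = (fun p => a p • bracket X Y p) + (fun p => D X a p • Y p)
  D_bracket : ∀ X Y a, IsVF X → IsVF Y → IsFn a →
    D (bracket X Y) a = D X (D Y a) - D Y (D X a)

namespace SSRM

variable {M : Type*} {T : M → Type*} [∀ p, AddCommGroup (T p)] [∀ p, Module ℝ (T p)]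

/-- `⟨X,Y⟩ = g(X,Y)`, as a function on `M`. -/
def gf (S : SSRM M T) (X Y : ∀ p, T p) : M → ℝ := fun p => S.g p (X p) (Y p)

/-- The Koszul form
`K(X,Y,Z) = (1/2){X⟨Y,Z⟩ + Y⟨Z,X⟩ − Z⟨X,Y⟩ − ⟨X,[Y,Z]⟩ + ⟨Y,[Z,X]⟩ + ⟨Z,[X,Y]⟩}`. -/
def K (S : SSRM M T) (X Y Z : ∀ p, T p) : M → ℝ :=
  ((1 : ℝ) / 2) • (S.D X (S.gf Y Z) + S.D Y (S.gf Z X) - S.D Z (S.gf X Y)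
    - S.gf X (S.bracket Y Z) + S.gf Y (S.bracket Z X) + S.gf Z (S.bracket X Y))

/-- The semi-symmetric metric Koszul form (w.r.t. the vector field `P`):
`K̄(X,Y,Z) = K(X,Y,Z) + g(Y,P)g(X,Z) − g(X,Y)g(P,Z)`. -/
def Kbar (S : SSRM M T) (P X Y Z : ∀ p, T p) : M → ℝ :=
  S.K X Y Z + S.gf Y P * S.gf X Z - S.gf X Y * S.gf P Z

/-- The semi-symmetric non-metric Koszul form (w.r.t. the vector field `P`):
`K̂(X,Y,Z) = K(X,Y,Z) + g(Y,P)g(X,Z)`. -/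
def Khat (S : SSRM M T) (P X Y Z : ∀ p, T p) : M → ℝ :=
  S.K X Y Z + S.gf Y P * S.gf X Z

/-- The Lie derivative of the metric:
`(L_Y g)(Z,X) = Y(g(Z,X)) − g([Y,Z],X) − g(Z,[Y,X])`. -/
def lieD (S : SSRM M T) (Y Z X : ∀ p, T p) : M → ℝ :=
  S.D Y (S.gf Z X) - S.gf (S.bracket Y Z) X - S.gf Z (S.bracket Y X)

/-- `W ∈ Γ₀(TM)`: a smooth vector field with `g(W,Y) = 0` for every vector field `Y`. -/
def Gamma0 (S : SSRM M T) (W : ∀ p, T p) : Prop :=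
  S.IsVF W ∧ ∀ Y, S.IsVF Y → S.gf W Y = 0

/-- A 1-form `ω` (given by its action `ω(Z)` on vector fields) belongs to `A^•(M)`:
at every point `p` the covector `ω_p` lies in the image of the flat map
`v ↦ g_p(v,·) : T_pM → T_p*M`. -/
def MemAsup (S : SSRM M T) (ω : (∀ p, T p) → M → ℝ) : Prop :=
  ∀ p : M, ∃ v : T p, ∀ Z, S.IsVF Z → ω Z p = S.g p v (Z p)

/-- `(M,g)` is radical-stationary: `K(X,Y,·) ∈ A^•(M)` for all vector fields `X,Y`. -/
def RadicalStationary (S : SSRM M T) : Prop :=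
  ∀ X Y, S.IsVF X → S.IsVF Y → S.MemAsup fun Z => S.K X Y Z

/-- `Y^♭ = g(Y,·)`, as a 1-form. -/
def flat (S : SSRM M T) (Y : ∀ p, T p) : (∀ p, T p) → M → ℝ := fun Z => S.gf Y Z

/-- The semi-symmetric metric lower covariant derivative: `∇̄♭_X Y = K̄(X,Y,·)`. -/
def nablaFlatBar (S : SSRM M T) (P X Y : ∀ p, T p) : (∀ p, T p) → M → ℝ :=
  fun Z => S.Kbar P X Y Z

/-- The semi-symmetric non-metric lower covariant derivative: `∇̂♭_X Y = K̂(X,Y,·)`. -/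
def nablaFlatHat (S : SSRM M T) (P X Y : ∀ p, T p) : (∀ p, T p) → M → ℝ :=
  fun Z => S.Khat P X Y Z

/-- Pointwise application of a bundle map `J : TM → TM` to a vector field. -/
def Jv (J : ∀ p, T p →ₗ[ℝ] T p) (X : ∀ p, T p) : ∀ p, T p := fun p => J p (X p)

/-- `J` is an almost product structure on `(M,g)`: a smooth bundle map `J : TM → TM`
with `J² = id` and `g(JX,JY) = g(X,Y)`. -/
structure IsAlmostProduct (S : SSRM M T) (J : ∀ p, T p →ₗ[ℝ] T p) : Prop where
  invol : ∀ p v, J p (J p v) = v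
  compat : ∀ p u v, S.g p (J p u) (J p v) = S.g p u v
  smooth : ∀ X, S.IsVF X → S.IsVF (Jv J X)

/-- The almost product Koszul form `K̃(X,Y,Z) = (1/2)[K(X,Y,Z) + K(X,JY,JZ)]`. -/
def Ktilde (S : SSRM M T) (J : ∀ p, T p →ₗ[ℝ] T p) (X Y Z : ∀ p, T p) : M → ℝ :=
  ((1 : ℝ) / 2) • (S.K X Y Z + S.K X (Jv J Y) (Jv J Z))

/-- The almost product lower covariant derivative: `∇̃♭_X Y = K̃(X,Y,·)`. -/
def nablaFlatTilde (S : SSRM M T) (J : ∀ p, T p →ₗ[ℝ] T p) (X Y : ∀ p, T p) :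
    (∀ p, T p) → M → ℝ :=
  fun Z => S.Ktilde J X Y Z

end SSRM

namespace SSRM

variable {MB MF : Type*} {TB : MB → Type*} {TF : MF → Type*}
  [∀ p, AddCommGroup (TB p)] [∀ p, Module ℝ (TB p)]
  [∀ q, AddCommGroup (TF q)] [∀ q, Module ℝ (TF q)]

/-- The lift to the product `B × F` of a vector field on the base `B`. -/
def liftB (X : ∀ p, TB p) : ∀ pq : MB × MF, TB pq.1 × TF pq.2 :=
  fun pq => (X pq.1, 0)

/-- The lift to the product `B × F` of a vector field on the fiber `F`. -/
def liftF (U : ∀ q, TF q) : ∀ pq : MB × MF, TB pq.1 × TF pq.2 :=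
  fun pq => (0, U pq.2)

/-- `W` is the warped product `B ×_f F` of the singular semi-Riemannian manifolds
`B` and `F` with warping function `f ∈ C^∞(B)`: a singular semi-Riemannian structure
on the product manifold `B × F` whose metric is
`⟨x,y⟩ = g_B(dπ_B x, dπ_B y) + f(π_B p)² g_F(dπ_F x, dπ_F y)`, and whose smooth
structure, directional derivative and Lie bracket behave canonically on the lifts of
functions and of vector fields from the two factors. -/
structure IsWarpedProduct (B : SSRM MB TB) (F : SSRM MF TF) (f : MB → ℝ)
    (W : SSRM (MB × MF) fun pq => TB pq.1 × TF pq.2) : Prop where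
  smooth_f : B.IsFn f
  metric : ∀ (pq : MB × MF) (u v : TB pq.1 × TF pq.2),
    W.g pq u v = B.g pq.1 u.1 v.1 + f pq.1 ^ 2 * F.g pq.2 u.2 v.2
  fn_liftB : ∀ a, B.IsFn a → W.IsFn fun pq => a pq.1
  fn_liftF : ∀ b, F.IsFn b → W.IsFn fun pq => b pq.2
  vf_liftB : ∀ X, B.IsVF X → W.IsVF (liftB X)
  vf_liftF : ∀ U, F.IsVF U → W.IsVF (liftF U)
  D_liftB_fnB : ∀ X a, B.IsVF X → B.IsFn a →
    W.D (liftB X) (fun pq => a pq.1) = fun pq => B.D X a pq.1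
  D_liftB_fnF : ∀ X b, B.IsVF X → F.IsFn b →
    W.D (liftB X) (fun pq => b pq.2) = 0
  D_liftF_fnB : ∀ U a, F.IsVF U → B.IsFn a →
    W.D (liftF U) (fun pq => a pq.1) = 0
  D_liftF_fnF : ∀ U b, F.IsVF U → F.IsFn b →
    W.D (liftF U) (fun pq => b pq.2) = fun pq => F.D U b pq.2
  bracket_BB : ∀ X Y, B.IsVF X → B.IsVF Y →
    W.bracket (liftB X) (liftB Y) = liftB (B.bracket X Y)
  bracket_BF : ∀ X U, B.IsVF X → F.IsVF U →
    W.bracket (liftB X) (liftF U) = 0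
  bracket_FF : ∀ U V, F.IsVF U → F.IsVF V →
    W.bracket (liftF U) (liftF V) = liftF (F.bracket U V)

end SSRM

/-- Proposition 2.15: the semi-symmetric metric Koszul form of a
(possibly degenerate) warped product `B ×_f F`, with respect to a vector field
`P ∈ Γ(TB)`, on lifts of vector fields `X,Y,Z ∈ Γ(TB)` and `U,V,W ∈ Γ(TF)`, in
terms of the data on the factors. -/
theorem semiSymmetricMetricKoszul_warpedProduct_baseP
    {MB MF : Type*} {TB : MB → Type*} {TF : MF → Type*}
    [∀ p, AddCommGroup (TB p)] [∀ p, Module ℝ (TB p)]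
    [∀ q, AddCommGroup (TF q)] [∀ q, Module ℝ (TF q)]
    (B : SSRM MB TB) (F : SSRM MF TF) (f : MB → ℝ)
    (Wp : SSRM (MB × MF) fun pq => TB pq.1 × TF pq.2)
    (hWp : SSRM.IsWarpedProduct B F f Wp)
    (X Y Z P : ∀ p, TB p) (hX : B.IsVF X) (hY : B.IsVF Y) (hZ : B.IsVF Z)
    (hP : B.IsVF P)
    (U V W : ∀ q, TF q) (hU : F.IsVF U) (hV : F.IsVF V) (hW : F.IsVF W) :
    -- (1) `K̄(X,Y,Z) = K̄_B(X,Y,Z)`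
    Wp.Kbar (SSRM.liftB P) (SSRM.liftB X) (SSRM.liftB Y) (SSRM.liftB Z)
      = (fun pq => B.Kbar P X Y Z pq.1) ∧
    -- (2) `K̄(X,Y,W) = K̄(X,W,Y) = K̄(W,X,Y) = 0`
    Wp.Kbar (SSRM.liftB P) (SSRM.liftB X) (SSRM.liftB Y) (SSRM.liftF W) = 0 ∧
    Wp.Kbar (SSRM.liftB P) (SSRM.liftB X) (SSRM.liftF W) (SSRM.liftB Y) = 0 ∧
    Wp.Kbar (SSRM.liftB P) (SSRM.liftF W) (SSRM.liftB X) (SSRM.liftB Y) = 0 ∧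
    -- (3) `K̄(X,V,W) = f·g_F(V,W)·X(f)`
    Wp.Kbar (SSRM.liftB P) (SSRM.liftB X) (SSRM.liftF V) (SSRM.liftF W)
      = (fun pq => f pq.1 * F.gf V W pq.2 * B.D X f pq.1) ∧
    -- (4) `K̄(V,X,W) = −K̄(V,W,X) = f·g_F(V,W)·X(f) + f²·g_B(X,P)·g_F(V,W)`
    Wp.Kbar (SSRM.liftB P) (SSRM.liftF V) (SSRM.liftB X) (SSRM.liftF W)
      = -Wp.Kbar (SSRM.liftB P) (SSRM.liftF V) (SSRM.liftF W) (SSRM.liftB X) ∧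
    Wp.Kbar (SSRM.liftB P) (SSRM.liftF V) (SSRM.liftB X) (SSRM.liftF W)
      = (fun pq => f pq.1 * F.gf V W pq.2 * B.D X f pq.1
          + f pq.1 ^ 2 * B.gf X P pq.1 * F.gf V W pq.2) ∧
    -- (5) `K̄(U,V,W) = f²·K_F(U,V,W)`
    Wp.Kbar (SSRM.liftB P) (SSRM.liftF U) (SSRM.liftF V) (SSRM.liftF W)
      = (fun pq => f pq.1 ^ 2 * F.K U V W pq.2) := by
  classical
  have hvX := hWp.vf_liftB X hX
  have hvY := hWp.vf_liftB Y hY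
  have hvP := hWp.vf_liftB P hP
  have hvU := hWp.vf_liftF U hU
  have hvV := hWp.vf_liftF V hV
  have hvW := hWp.vf_liftF W hW
  have hf := hWp.smooth_f
  have hgBB : ∀ X' Y' : ∀ p, TB p,
      Wp.gf (SSRM.liftB X') (SSRM.liftB Y') = fun pq => B.gf X' Y' pq.1 := by
    intro X' Y'; funext pq
    simp [SSRM.gf, SSRM.liftB, hWp.metric]
  have hgBF : ∀ (X' : ∀ p, TB p) (U' : ∀ q, TF q),
      Wp.gf (SSRM.liftB X') (SSRM.liftF U') = 0 := by
    intro X' U'; funext pq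
    simp [SSRM.gf, SSRM.liftB, SSRM.liftF, hWp.metric]
  have hgFB : ∀ (U' : ∀ q, TF q) (X' : ∀ p, TB p),
      Wp.gf (SSRM.liftF U') (SSRM.liftB X') = 0 := by
    intro U' X'; funext pq
    simp [SSRM.gf, SSRM.liftB, SSRM.liftF, hWp.metric]
  have hgFF : ∀ U' V' : ∀ q, TF q,
      Wp.gf (SSRM.liftF U') (SSRM.liftF V')
        = fun pq => f pq.1 ^ 2 * F.gf U' V' pq.2 := by
    intro U' V'; funext pq
    simp [SSRM.gf, SSRM.liftF, hWp.metric]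
  have hg0 : ∀ Xv : ∀ pq : MB × MF, TB pq.1 × TF pq.2, Wp.gf Xv 0 = 0 := by
    intro Xv; funext pq; simp [SSRM.gf]
  have hbFB : ∀ (U' : ∀ q, TF q) (X' : ∀ p, TB p), F.IsVF U' → B.IsVF X' →
      Wp.bracket (SSRM.liftF U') (SSRM.liftB X') = 0 := by
    intro U' X' hU' hX'
    rw [Wp.bracket_antisymm _ _ (hWp.vf_liftF U' hU') (hWp.vf_liftB X' hX'),
      hWp.bracket_BF X' U' hX' hU']
    simp
  have hD0 : ∀ Xv : ∀ pq : MB × MF, TB pq.1 × TF pq.2, Wp.IsVF Xv →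
      Wp.D Xv 0 = 0 := fun Xv hXv => Wp.D_const Xv 0 hXv
  have hdBBB : ∀ X' Y' Z' : ∀ p, TB p, B.IsVF X' → B.IsVF Y' → B.IsVF Z' →
      Wp.D (SSRM.liftB X') (Wp.gf (SSRM.liftB Y') (SSRM.liftB Z'))
        = fun pq => B.D X' (B.gf Y' Z') pq.1 := by
    intro X' Y' Z' hX' hY' hZ'
    rw [hgBB Y' Z']
    exact hWp.D_liftB_fnB X' (B.gf Y' Z') hX' (B.g_smooth Y' Z' hY' hZ')
  have hdFBB : ∀ (U' : ∀ q, TF q) (Y' Z' : ∀ p, TB p),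
      F.IsVF U' → B.IsVF Y' → B.IsVF Z' →
      Wp.D (SSRM.liftF U') (Wp.gf (SSRM.liftB Y') (SSRM.liftB Z')) = 0 := by
    intro U' Y' Z' hU' hY' hZ'
    rw [hgBB Y' Z']
    exact hWp.D_liftF_fnB U' (B.gf Y' Z') hU' (B.g_smooth Y' Z' hY' hZ')
  have hFFprod : ∀ U' V' : ∀ q, TF q,
      (fun pq : MB × MF => f pq.1 ^ 2 * F.gf U' V' pq.2)
        = (fun pq : MB × MF => (f * f) pq.1) * (fun pq => F.gf U' V' pq.2) := by
    intro U' V'; funext pq; simp only [Pi.mul_apply]; ring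
  have hdBFF : ∀ (X' : ∀ p, TB p) (U' V' : ∀ q, TF q),
      B.IsVF X' → F.IsVF U' → F.IsVF V' →
      Wp.D (SSRM.liftB X') (Wp.gf (SSRM.liftF U') (SSRM.liftF V'))
        = fun pq => (B.D X' f pq.1 * f pq.1 + f pq.1 * B.D X' f pq.1)
            * F.gf U' V' pq.2 := by
    intro X' U' V' hX' hU' hV'
    rw [hgFF U' V', hFFprod U' V',
      Wp.D_mul_fn _ _ _ (hWp.vf_liftB X' hX')
        (hWp.fn_liftB (f * f) (B.fn_mul f f hf hf))
        (hWp.fn_liftF (F.gf U' V') (F.g_smooth U' V' hU' hV')),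
      hWp.D_liftB_fnB X' (f * f) hX' (B.fn_mul f f hf hf),
      hWp.D_liftB_fnF X' (F.gf U' V') hX' (F.g_smooth U' V' hU' hV'),
      B.D_mul_fn X' f f hX' hf hf]
    funext pq
    simp [Pi.mul_apply, Pi.add_apply]
  have hdFFF : ∀ U' V' W' : ∀ q, TF q, F.IsVF U' → F.IsVF V' → F.IsVF W' →
      Wp.D (SSRM.liftF U') (Wp.gf (SSRM.liftF V') (SSRM.liftF W'))
        = fun pq => f pq.1 * f pq.1 * F.D U' (F.gf V' W') pq.2 := by
    intro U' V' W' hU' hV' hW'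
    rw [hgFF V' W', hFFprod V' W',
      Wp.D_mul_fn _ _ _ (hWp.vf_liftF U' hU')
        (hWp.fn_liftB (f * f) (B.fn_mul f f hf hf))
        (hWp.fn_liftF (F.gf V' W') (F.g_smooth V' W' hV' hW')),
      hWp.D_liftF_fnB U' (f * f) hU' (B.fn_mul f f hf hf),
      hWp.D_liftF_fnF U' (F.gf V' W') hU' (F.g_smooth V' W' hV' hW')]
    funext pq
    simp [Pi.mul_apply, Pi.add_apply]
  have hsymB : ∀ X' Y' : ∀ p, TB p, B.gf X' Y' = B.gf Y' X' := by
    intro X' Y'; funext p; exact B.g_symm p _ _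
  have hsymF : ∀ U' V' : ∀ q, TF q, F.gf U' V' = F.gf V' U' := by
    intro U' V'; funext q; exact F.g_symm q _ _
  refine ⟨?_, ?_, ?_, ?_, ?_, ?_, ?_, ?_⟩
  · -- (1)
    unfold SSRM.Kbar SSRM.K
    rw [hWp.bracket_BB Y Z hY hZ, hWp.bracket_BB Z X hZ hX,
      hWp.bracket_BB X Y hX hY,
      hdBBB X Y Z hX hY hZ, hdBBB Y Z X hY hZ hX, hdBBB Z X Y hZ hX hY]
    simp only [hgBB]
    funext pq
    simp only [Pi.add_apply, Pi.sub_apply, Pi.mul_apply, Pi.smul_apply,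
      Pi.zero_apply, smul_eq_mul]
    try ring
  · -- (2a) K̄(X,Y,W)
    unfold SSRM.Kbar SSRM.K
    rw [hWp.bracket_BF Y W hY hW, hbFB W X hW hX, hWp.bracket_BB X Y hX hY,
      hdFBB W X Y hW hX hY]
    simp only [hgBB, hgBF, hgFB, hg0, hD0 _ hvX, hD0 _ hvY]
    funext pq
    simp only [Pi.add_apply, Pi.sub_apply, Pi.mul_apply, Pi.smul_apply,
      Pi.zero_apply, smul_eq_mul]
    try ring
  · -- (2b) K̄(X,W,Y)
    unfold SSRM.Kbar SSRM.K
    rw [hbFB W Y hW hY, hWp.bracket_BB Y X hY hX, hWp.bracket_BF X W hX hW,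
      hdFBB W Y X hW hY hX]
    simp only [hgBB, hgBF, hgFB, hg0, hD0 _ hvX, hD0 _ hvY]
    funext pq
    simp only [Pi.add_apply, Pi.sub_apply, Pi.mul_apply, Pi.smul_apply,
      Pi.zero_apply, smul_eq_mul]
    try ring
  · -- (2c) K̄(W,X,Y)
    unfold SSRM.Kbar SSRM.K
    rw [hWp.bracket_BB X Y hX hY, hbFB W X hW hX, hWp.bracket_BF Y W hY hW,
      hdFBB W X Y hW hX hY]
    simp only [hgBB, hgBF, hgFB, hg0, hD0 _ hvX, hD0 _ hvY]
    funext pq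
    simp only [Pi.add_apply, Pi.sub_apply, Pi.mul_apply, Pi.smul_apply,
      Pi.zero_apply, smul_eq_mul]
    try ring
  · -- (3) K̄(X,V,W)
    unfold SSRM.Kbar SSRM.K
    rw [hWp.bracket_FF V W hV hW, hbFB W X hW hX, hWp.bracket_BF X V hX hV,
      hdBFF X V W hX hV hW]
    simp only [hgBB, hgBF, hgFB, hgFF, hg0, hD0 _ hvV, hD0 _ hvW]
    funext pq
    simp only [Pi.add_apply, Pi.sub_apply, Pi.mul_apply, Pi.smul_apply,
      Pi.zero_apply, smul_eq_mul]
    try ring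
  · -- (4a) K̄(V,X,W) = -K̄(V,W,X)
    have k4 : Wp.Kbar (SSRM.liftB P) (SSRM.liftF V) (SSRM.liftB X) (SSRM.liftF W)
        = fun pq => f pq.1 * F.gf V W pq.2 * B.D X f pq.1
            + f pq.1 ^ 2 * B.gf X P pq.1 * F.gf V W pq.2 := by
      unfold SSRM.Kbar SSRM.K
      rw [hWp.bracket_BF X W hX hW, hWp.bracket_FF W V hW hV, hbFB V X hV hX,
        hdBFF X W V hX hW hV]
      simp only [hgBB, hgBF, hgFB, hgFF, hg0, hD0 _ hvV, hD0 _ hvW,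
        hsymF W V]
      funext pq
      simp only [Pi.add_apply, Pi.sub_apply, Pi.mul_apply, Pi.smul_apply,
        Pi.zero_apply, smul_eq_mul]
      ring
    have k4' : Wp.Kbar (SSRM.liftB P) (SSRM.liftF V) (SSRM.liftF W) (SSRM.liftB X)
        = fun pq => -(f pq.1 * F.gf V W pq.2 * B.D X f pq.1
            + f pq.1 ^ 2 * B.gf X P pq.1 * F.gf V W pq.2) := by
      unfold SSRM.Kbar SSRM.K
      rw [hbFB W X hW hX, hWp.bracket_BF X V hX hV, hWp.bracket_FF V W hV hW,
        hdBFF X V W hX hV hW]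
      simp only [hgBB, hgBF, hgFB, hgFF, hg0, hD0 _ hvV, hD0 _ hvW,
        hsymB P X]
      funext pq
      simp only [Pi.add_apply, Pi.sub_apply, Pi.mul_apply, Pi.smul_apply,
        Pi.zero_apply, smul_eq_mul]
      ring
    rw [k4, k4']
    funext pq
    simp only [Pi.neg_apply, neg_neg]
  · -- (4b)
    unfold SSRM.Kbar SSRM.K
    rw [hWp.bracket_BF X W hX hW, hWp.bracket_FF W V hW hV, hbFB V X hV hX,
      hdBFF X W V hX hW hV]
    simp only [hgBB, hgBF, hgFB, hgFF, hg0, hD0 _ hvV, hD0 _ hvW,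
      hsymF W V]
    funext pq
    simp only [Pi.add_apply, Pi.sub_apply, Pi.mul_apply, Pi.smul_apply,
      Pi.zero_apply, smul_eq_mul]
    try ring
  · -- (5) K̄(U,V,W)
    unfold SSRM.Kbar SSRM.K
    rw [hWp.bracket_FF V W hV hW, hWp.bracket_FF W U hW hU,
      hWp.bracket_FF U V hU hV,
      hdFFF U V W hU hV hW, hdFFF V W U hV hW hU, hdFFF W U V hW hU hV]
    simp only [hgBB, hgBF, hgFB, hgFF, hg0]
    funext pq
    simp only [Pi.add_apply, Pi.sub_apply, Pi.mul_apply, Pi.smul_apply,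
      Pi.zero_apply, smul_eq_mul]
    try ring
end
end

section
/- Let B×_f F be a (possibly degenerate) warped product of singular semi-Riemannian manifolds (B,g_B) and (F,g_F) with warping function f ∈ C^∞(B), let X,Y,Z be vector fields on B and U,V,W vector fields on F (identified with their lifts), and let P be a vector field on F. Let K̄ be the semi-symmetric metric Koszul form of B×_f F with respect to P, K_B the Koszul form of (B,g_B), and K_F that of (F,g_F). Then: (1) K̄(X,Y,Z) = K_B(X,Y,Z); (2) K̄(X,Y,W) = −K̄(X,W,Y) = −f²·g_B(X,Y)·g_F(P,W); (3) K̄(W,X,Y) = 0; (4) K̄(X,V,W) = K̄(V,X,W) = −K̄(V,W,X) = f·g_F(V,W)·X(f); (5) K̄(U,V,W) = f²·K_F(U,V,W) + f⁴·g_F(V,P)·g_F(U,W) − f⁴·g_F(U,V)·g_F(P,W). -/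
noncomputable section

open SSRM in
/-- Proposition 2.16: the semi-symmetric metric Koszul form of a
(possibly degenerate) warped product `B ×_f F`, with respect to a vector field
`P ∈ Γ(TF)`, on lifts of vector fields `X,Y,Z ∈ Γ(TB)` and `U,V,W ∈ Γ(TF)`, in
terms of the data on the factors. -/
theorem semiSymmetricMetricKoszul_warpedProduct_fiberP
    {MB MF : Type*} {TB : MB → Type*} {TF : MF → Type*}
    [∀ p, AddCommGroup (TB p)] [∀ p, Module ℝ (TB p)]
    [∀ q, AddCommGroup (TF q)] [∀ q, Module ℝ (TF q)]
    (B : SSRM MB TB) (F : SSRM MF TF) (f : MB → ℝ)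
    (Wp : SSRM (MB × MF) fun pq => TB pq.1 × TF pq.2)
    (hWp : SSRM.IsWarpedProduct B F f Wp)
    (X Y Z : ∀ p, TB p) (hX : B.IsVF X) (hY : B.IsVF Y) (hZ : B.IsVF Z)
    (P : ∀ q, TF q) (hP : F.IsVF P)
    (U V W : ∀ q, TF q) (hU : F.IsVF U) (hV : F.IsVF V) (hW : F.IsVF W) :
    -- (1) `K̄(X,Y,Z) = K_B(X,Y,Z)`
    Wp.Kbar (SSRM.liftF P) (SSRM.liftB X) (SSRM.liftB Y) (SSRM.liftB Z)
      = (fun pq => B.K X Y Z pq.1) ∧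
    -- (2) `K̄(X,Y,W) = −K̄(X,W,Y) = −f²·g_B(X,Y)·g_F(P,W)`
    Wp.Kbar (SSRM.liftF P) (SSRM.liftB X) (SSRM.liftB Y) (SSRM.liftF W)
      = -Wp.Kbar (SSRM.liftF P) (SSRM.liftB X) (SSRM.liftF W) (SSRM.liftB Y) ∧
    Wp.Kbar (SSRM.liftF P) (SSRM.liftB X) (SSRM.liftB Y) (SSRM.liftF W)
      = (fun pq => -(f pq.1 ^ 2 * B.gf X Y pq.1 * F.gf P W pq.2)) ∧
    -- (3) `K̄(W,X,Y) = 0`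
    Wp.Kbar (SSRM.liftF P) (SSRM.liftF W) (SSRM.liftB X) (SSRM.liftB Y) = 0 ∧
    -- (4) `K̄(X,V,W) = K̄(V,X,W) = −K̄(V,W,X) = f·g_F(V,W)·X(f)`
    Wp.Kbar (SSRM.liftF P) (SSRM.liftB X) (SSRM.liftF V) (SSRM.liftF W)
      = Wp.Kbar (SSRM.liftF P) (SSRM.liftF V) (SSRM.liftB X) (SSRM.liftF W) ∧
    Wp.Kbar (SSRM.liftF P) (SSRM.liftF V) (SSRM.liftB X) (SSRM.liftF W)
      = -Wp.Kbar (SSRM.liftF P) (SSRM.liftF V) (SSRM.liftF W) (SSRM.liftB X) ∧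
    Wp.Kbar (SSRM.liftF P) (SSRM.liftB X) (SSRM.liftF V) (SSRM.liftF W)
      = (fun pq => f pq.1 * F.gf V W pq.2 * B.D X f pq.1) ∧
    -- (5) `K̄(U,V,W) = f²·K_F(U,V,W) + f⁴·g_F(V,P)·g_F(U,W) − f⁴·g_F(U,V)·g_F(P,W)`
    Wp.Kbar (SSRM.liftF P) (SSRM.liftF U) (SSRM.liftF V) (SSRM.liftF W)
      = (fun pq => f pq.1 ^ 2 * F.K U V W pq.2
          + f pq.1 ^ 4 * F.gf V P pq.2 * F.gf U W pq.2
          - f pq.1 ^ 4 * F.gf U V pq.2 * F.gf P W pq.2) := by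
  
  classical
  have hf := hWp.smooth_f
  -- metric facts
  have hgBB : ∀ A C : ∀ p, TB p, Wp.gf (liftB A) (liftB C) = fun pq => B.gf A C pq.1 := by
    intro A C; funext pq
    simp [SSRM.gf, SSRM.liftB, hWp.metric]
  have hgBF : ∀ (A : ∀ p, TB p) (U' : ∀ q, TF q), Wp.gf (liftB A) (liftF U') = 0 := by
    intro A U'; funext pq
    simp [SSRM.gf, SSRM.liftB, SSRM.liftF, hWp.metric]
  have hgFB : ∀ (U' : ∀ q, TF q) (A : ∀ p, TB p), Wp.gf (liftF U') (liftB A) = 0 := by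
    intro U' A; funext pq
    simp [SSRM.gf, SSRM.liftB, SSRM.liftF, hWp.metric]
  have hgFF : ∀ U' V' : ∀ q, TF q, Wp.gf (liftF U') (liftF V')
      = fun pq => f pq.1 ^ 2 * F.gf U' V' pq.2 := by
    intro U' V'; funext pq
    simp [SSRM.gf, SSRM.liftF, hWp.metric]
  have hg0 : ∀ A : ∀ pq : MB × MF, TB pq.1 × TF pq.2, Wp.gf A 0 = 0 := by
    intro A; funext pq; simp [SSRM.gf]
  have hD0 : ∀ A, Wp.IsVF A → Wp.D A 0 = 0 := by
    intro A hA
    have := Wp.D_const A 0 hA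
    exact this
  have hbFB : ∀ (U' : ∀ q, TF q) (A : ∀ p, TB p), F.IsVF U' → B.IsVF A →
      Wp.bracket (liftF U') (liftB A) = 0 := by
    intro U' A hU' hA
    rw [Wp.bracket_antisymm _ _ (hWp.vf_liftF U' hU') (hWp.vf_liftB A hA),
      hWp.bracket_BF A U' hA hU']
    simp
  have hDBBB : ∀ A Y' Z', B.IsVF A → B.IsVF Y' → B.IsVF Z' →
      Wp.D (liftB A) (Wp.gf (liftB Y') (liftB Z')) = fun pq => B.D A (B.gf Y' Z') pq.1 := by
    intro A Y' Z' hA hY' hZ'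
    rw [hgBB]
    exact hWp.D_liftB_fnB A _ hA (B.g_smooth Y' Z' hY' hZ')
  have hDB_BF : ∀ A (Y' : ∀ p, TB p) (U' : ∀ q, TF q), B.IsVF A →
      Wp.D (liftB A) (Wp.gf (liftB Y') (liftF U')) = 0 := by
    intro A Y' U' hA; rw [hgBF]; exact hD0 _ (hWp.vf_liftB A hA)
  have hDB_FB : ∀ A (U' : ∀ q, TF q) (Y' : ∀ p, TB p), B.IsVF A →
      Wp.D (liftB A) (Wp.gf (liftF U') (liftB Y')) = 0 := by
    intro A U' Y' hA; rw [hgFB]; exact hD0 _ (hWp.vf_liftB A hA)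
  have hff : B.IsFn (f * f) := B.fn_mul f f hf hf
  have hDBFF : ∀ A U' V', B.IsVF A → F.IsVF U' → F.IsVF V' →
      Wp.D (liftB A) (Wp.gf (liftF U') (liftF V'))
        = fun pq => 2 * f pq.1 * B.D A f pq.1 * F.gf U' V' pq.2 := by
    intro A U' V' hA hU' hV'
    rw [hgFF]
    have hsplit : (fun pq : MB × MF => f pq.1 ^ 2 * F.gf U' V' pq.2)
        = (fun pq : MB × MF => (f * f) pq.1) * (fun pq : MB × MF => F.gf U' V' pq.2) := by
      funext pq; simp only [Pi.mul_apply]; ring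
    rw [hsplit, Wp.D_mul_fn (liftB A) (fun pq => (f * f) pq.1)
      (fun pq => F.gf U' V' pq.2) (hWp.vf_liftB A hA) (hWp.fn_liftB _ hff)
      (hWp.fn_liftF _ (F.g_smooth U' V' hU' hV')),
      hWp.D_liftB_fnB A _ hA hff, hWp.D_liftB_fnF A (F.gf U' V') hA (F.g_smooth U' V' hU' hV')]
    have hDff : B.D A (f * f) = B.D A f * f + f * B.D A f :=
      B.D_mul_fn A f f hA hf hf
    funext pq
    simp only [Pi.add_apply, Pi.mul_apply, Pi.zero_apply, hDff]
    ring
  have hDFBB : ∀ U' Y' Z', F.IsVF U' → B.IsVF Y' → B.IsVF Z' →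
      Wp.D (liftF U') (Wp.gf (liftB Y') (liftB Z')) = 0 := by
    intro U' Y' Z' hU' hY' hZ'
    rw [hgBB]
    exact hWp.D_liftF_fnB U' _ hU' (B.g_smooth Y' Z' hY' hZ')
  have hDF_BF : ∀ U' (Y' : ∀ p, TB p) (V' : ∀ q, TF q), F.IsVF U' →
      Wp.D (liftF U') (Wp.gf (liftB Y') (liftF V')) = 0 := by
    intro U' Y' V' hU'; rw [hgBF]; exact hD0 _ (hWp.vf_liftF U' hU')
  have hDF_FB : ∀ U' (V' : ∀ q, TF q) (Y' : ∀ p, TB p), F.IsVF U' →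
      Wp.D (liftF U') (Wp.gf (liftF V') (liftB Y')) = 0 := by
    intro U' V' Y' hU'; rw [hgFB]; exact hD0 _ (hWp.vf_liftF U' hU')
  have hDFFF : ∀ U' V' W', F.IsVF U' → F.IsVF V' → F.IsVF W' →
      Wp.D (liftF U') (Wp.gf (liftF V') (liftF W'))
        = fun pq => f pq.1 ^ 2 * F.D U' (F.gf V' W') pq.2 := by
    intro U' V' W' hU' hV' hW'
    rw [hgFF]
    have hsplit : (fun pq : MB × MF => f pq.1 ^ 2 * F.gf V' W' pq.2)
        = (fun pq : MB × MF => (f * f) pq.1) * (fun pq : MB × MF => F.gf V' W' pq.2) := by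
      funext pq; simp only [Pi.mul_apply]; ring
    rw [hsplit, Wp.D_mul_fn (liftF U') (fun pq => (f * f) pq.1)
      (fun pq => F.gf V' W' pq.2) (hWp.vf_liftF U' hU') (hWp.fn_liftB _ hff)
      (hWp.fn_liftF _ (F.g_smooth V' W' hV' hW')),
      hWp.D_liftF_fnB U' _ hU' hff, hWp.D_liftF_fnF U' (F.gf V' W') hU' (F.g_smooth V' W' hV' hW')]
    funext pq
    simp only [Pi.add_apply, Pi.mul_apply, Pi.zero_apply]
    ring
  refine ⟨?_, ?_, ?_, ?_, ?_, ?_, ?_, ?_⟩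
  · -- (1)
    simp only [SSRM.Kbar, SSRM.K]
    rw [hWp.bracket_BB Y Z hY hZ, hWp.bracket_BB Z X hZ hX, hWp.bracket_BB X Y hX hY,
      hDBBB X Y Z hX hY hZ, hDBBB Y Z X hY hZ hX, hDBBB Z X Y hZ hX hY]
    simp only [hgBB, hgBF, hgFB, hgFF, hg0]
    funext pq
    simp only [Pi.add_apply, Pi.sub_apply, Pi.mul_apply, Pi.smul_apply, Pi.neg_apply,
      Pi.zero_apply, smul_eq_mul]
    ring
  · -- (2a)
    simp only [SSRM.Kbar, SSRM.K]
    rw [hWp.bracket_BF Y W hY hW, hbFB W X hW hX, hWp.bracket_BB X Y hX hY,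
      hbFB W Y hW hY, hWp.bracket_BB Y X hY hX, hWp.bracket_BF X W hX hW,
      hDB_BF X Y W hX, hDB_FB Y W X hY, hDFBB W X Y hW hX hY,
      hDB_FB X W Y hX, hDFBB W Y X hW hY hX, hDB_BF Y X W hY]
    simp only [hgBB, hgBF, hgFB, hgFF, hg0]
    funext pq
    simp only [Pi.add_apply, Pi.sub_apply, Pi.mul_apply, Pi.smul_apply, Pi.neg_apply,
      Pi.zero_apply, smul_eq_mul]
    rw [show F.gf W P pq.2 = F.gf P W pq.2 from F.g_symm _ _ _]
    ring
  · -- (2b)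
    simp only [SSRM.Kbar, SSRM.K]
    rw [hWp.bracket_BF Y W hY hW, hbFB W X hW hX, hWp.bracket_BB X Y hX hY,
      hDB_BF X Y W hX, hDB_FB Y W X hY, hDFBB W X Y hW hX hY]
    simp only [hgBB, hgBF, hgFB, hgFF, hg0]
    funext pq
    simp only [Pi.add_apply, Pi.sub_apply, Pi.mul_apply, Pi.smul_apply, Pi.neg_apply,
      Pi.zero_apply, smul_eq_mul]
    ring
  · -- (3)
    simp only [SSRM.Kbar, SSRM.K]
    rw [hWp.bracket_BB X Y hX hY, hWp.bracket_BF Y W hY hW, hbFB W X hW hX,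
      hDFBB W X Y hW hX hY, hDB_BF X Y W hX, hDB_FB Y W X hY]
    simp only [hgBB, hgBF, hgFB, hgFF, hg0]
    funext pq
    simp only [Pi.add_apply, Pi.sub_apply, Pi.mul_apply, Pi.smul_apply, Pi.neg_apply,
      Pi.zero_apply, smul_eq_mul]
    ring
  · -- (4a)
    simp only [SSRM.Kbar, SSRM.K]
    rw [hWp.bracket_FF V W hV hW, hbFB W X hW hX, hWp.bracket_BF X V hX hV,
      hWp.bracket_BF X W hX hW, hWp.bracket_FF W V hW hV, hbFB V X hV hX,
      hDBFF X V W hX hV hW, hDF_FB V W X hV, hDF_BF W X V hW,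
      hDF_BF V X W hV, hDBFF X W V hX hW hV, hDF_FB W V X hW]
    simp only [hgBB, hgBF, hgFB, hgFF, hg0]
    funext pq
    simp only [Pi.add_apply, Pi.sub_apply, Pi.mul_apply, Pi.smul_apply, Pi.neg_apply,
      Pi.zero_apply, smul_eq_mul]
    rw [show F.gf W V pq.2 = F.gf V W pq.2 from F.g_symm _ _ _]
    ring
  · -- (4b)
    simp only [SSRM.Kbar, SSRM.K]
    rw [hWp.bracket_BF X W hX hW, hWp.bracket_FF W V hW hV, hbFB V X hV hX,
      hbFB W X hW hX, hWp.bracket_BF X V hX hV, hWp.bracket_FF V W hV hW,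
      hDF_BF V X W hV, hDBFF X W V hX hW hV, hDF_FB W V X hW,
      hDF_FB V W X hV, hDF_BF W X V hW, hDBFF X V W hX hV hW]
    simp only [hgBB, hgBF, hgFB, hgFF, hg0]
    funext pq
    simp only [Pi.add_apply, Pi.sub_apply, Pi.mul_apply, Pi.smul_apply, Pi.neg_apply,
      Pi.zero_apply, smul_eq_mul]
    rw [show F.gf W V pq.2 = F.gf V W pq.2 from F.g_symm _ _ _]
    ring
  · -- (4c)
    simp only [SSRM.Kbar, SSRM.K]
    rw [hWp.bracket_FF V W hV hW, hbFB W X hW hX, hWp.bracket_BF X V hX hV,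
      hDBFF X V W hX hV hW, hDF_FB V W X hV, hDF_BF W X V hW]
    simp only [hgBB, hgBF, hgFB, hgFF, hg0]
    funext pq
    simp only [Pi.add_apply, Pi.sub_apply, Pi.mul_apply, Pi.smul_apply, Pi.neg_apply,
      Pi.zero_apply, smul_eq_mul]
    ring
  · -- (5)
    simp only [SSRM.Kbar, SSRM.K]
    rw [hWp.bracket_FF V W hV hW, hWp.bracket_FF W U hW hU, hWp.bracket_FF U V hU hV,
      hDFFF U V W hU hV hW, hDFFF V W U hV hW hU, hDFFF W U V hW hU hV]
    simp only [hgBB, hgBF, hgFB, hgFF, hg0]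
    funext pq
    simp only [Pi.add_apply, Pi.sub_apply, Pi.mul_apply, Pi.smul_apply, Pi.neg_apply,
      Pi.zero_apply, smul_eq_mul]
    ring
end
end

section
/- Let (M,g) be a singular semi-Riemannian manifold, P a fixed vector field on M, and K̂ the associated semi-symmetric non-metric Koszul form. Then for all smooth vector fields X,Y,Z on M and all f ∈ C^∞(M): (1) K̂ is additive and ℝ-linear in each of its three arguments; (2) K̂(fX,Y,Z) = f·K̂(X,Y,Z); (3) K̂(X,fY,Z) = f·K̂(X,Y,Z) + X(f)⟨Y,Z⟩; (4) K̂(X,Y,fZ) = f·K̂(X,Y,Z); (5) K̂(X,Y,Z) + K̂(X,Z,Y) = X⟨Y,Z⟩ + g(Y,P)g(X,Z) + g(Z,P)g(X,Y); (6) K̂(X,Y,Z) − K̂(Y,X,Z) = ⟨[X,Y] + g(Y,P)X − g(X,P)Y, Z⟩; (7) K̂(X,Y,Z) + K̂(Z,Y,X) = (L_Y g)(Z,X) + 2g(Y,P)g(X,Z); (8) K̂(X,Y,Z) + K̂(Y,Z,X) = Y⟨Z,X⟩ + ⟨[X,Y],Z⟩ + g(Y,P)g(X,Z) + g(Z,P)g(X,Y).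 -/
noncomputable section

namespace SSRM

section Aux

variable {M : Type*} {T : M → Type*} [∀ p, AddCommGroup (T p)] [∀ p, Module ℝ (T p)]
variable (S : SSRM M T)

lemma gf_symm' (X Y : ∀ p, T p) : S.gf X Y = S.gf Y X :=
  funext fun p => S.g_symm p (X p) (Y p)

lemma gf_add_left' (X X' Z : ∀ p, T p) : S.gf (X + X') Z = S.gf X Z + S.gf X' Z := by
  funext p; simp [SSRM.gf]

lemma gf_add_right' (Z X X' : ∀ p, T p) : S.gf Z (X + X') = S.gf Z X + S.gf Z X' := by
  funext p; simp [SSRM.gf]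

lemma gf_smul_left' (a : M → ℝ) (X Z : ∀ p, T p) :
    S.gf (fun p => a p • X p) Z = a * S.gf X Z := by
  funext p; simp [SSRM.gf]

lemma gf_smul_right' (Z : ∀ p, T p) (a : M → ℝ) (X : ∀ p, T p) :
    S.gf Z (fun p => a p • X p) = a * S.gf Z X := by
  funext p; simp [SSRM.gf, mul_comm]

lemma gf_neg_right' (Z X : ∀ p, T p) : S.gf Z (-X) = -S.gf Z X := by
  funext p; simp [SSRM.gf]

lemma gf_sub_left' (A B Z : ∀ p, T p) : S.gf (A - B) Z = S.gf A Z - S.gf B Z := by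
  funext p; simp [SSRM.gf]

lemma gf_add_right_fn' (Z : ∀ p, T p) (A B : ∀ p, T p) :
    S.gf Z (A + B) = S.gf Z A + S.gf Z B := S.gf_add_right' Z A B

lemma gf_sub_right' (Z A B : ∀ p, T p) : S.gf Z (A - B) = S.gf Z A - S.gf Z B := by
  funext p; simp [SSRM.gf]

lemma bracket_add_right' (X Y Z : ∀ p, T p) (hX : S.IsVF X) (hY : S.IsVF Y)
    (hZ : S.IsVF Z) : S.bracket X (Y + Z) = S.bracket X Y + S.bracket X Z := by
  rw [S.bracket_antisymm X (Y + Z) hX (S.vf_add Y Z hY hZ),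
    S.bracket_add_left Y Z X hY hZ hX, S.bracket_antisymm X Y hX hY,
    S.bracket_antisymm X Z hX hZ]
  abel

lemma bracket_smul_left' (a : M → ℝ) (X Y : ∀ p, T p) (ha : S.IsFn a)
    (hX : S.IsVF X) (hY : S.IsVF Y) :
    S.bracket (fun p => a p • X p) Y
      = (fun p => a p • S.bracket X Y p) - fun p => S.D Y a p • X p := by
  rw [S.bracket_antisymm _ Y (S.vf_smul a X ha hX) hY, S.bracket_leibniz Y a X hY ha hX,
    S.bracket_antisymm X Y hX hY]
  funext p
  simp [smul_neg]
  abel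

end Aux

end SSRM

/-- Theorem 3.2: properties of the semi-symmetric non-metric Koszul
form `K̂` of a singular semi-Riemannian manifold `(M,g)` with respect to a fixed
vector field `P`. -/
theorem semiSymmetricNonMetricKoszul_properties
    {M : Type*} {T : M → Type*} [∀ p, AddCommGroup (T p)] [∀ p, Module ℝ (T p)]
    (S : SSRM M T) (P : ∀ p, T p) (hP : S.IsVF P)
    (X Y Z : ∀ p, T p) (hX : S.IsVF X) (hY : S.IsVF Y) (hZ : S.IsVF Z)
    (f : M → ℝ) (hf : S.IsFn f) :
    -- (1) additivity and ℝ-linearity in each of the three arguments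
    (∀ X', S.IsVF X' → S.Khat P (X + X') Y Z = S.Khat P X Y Z + S.Khat P X' Y Z) ∧
    (∀ Y', S.IsVF Y' → S.Khat P X (Y + Y') Z = S.Khat P X Y Z + S.Khat P X Y' Z) ∧
    (∀ Z', S.IsVF Z' → S.Khat P X Y (Z + Z') = S.Khat P X Y Z + S.Khat P X Y Z') ∧
    (∀ r : ℝ, S.Khat P (r • X) Y Z = r • S.Khat P X Y Z) ∧
    (∀ r : ℝ, S.Khat P X (r • Y) Z = r • S.Khat P X Y Z) ∧
    (∀ r : ℝ, S.Khat P X Y (r • Z) = r • S.Khat P X Y Z) ∧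
    -- (2) `K̂(fX,Y,Z) = f·K̂(X,Y,Z)`
    S.Khat P (fun p => f p • X p) Y Z = f * S.Khat P X Y Z ∧
    -- (3) `K̂(X,fY,Z) = f·K̂(X,Y,Z) + X(f)⟨Y,Z⟩`
    S.Khat P X (fun p => f p • Y p) Z = f * S.Khat P X Y Z + S.D X f * S.gf Y Z ∧
    -- (4) `K̂(X,Y,fZ) = f·K̂(X,Y,Z)`
    S.Khat P X Y (fun p => f p • Z p) = f * S.Khat P X Y Z ∧
    -- (5) `K̂(X,Y,Z) + K̂(X,Z,Y) = X⟨Y,Z⟩ + g(Y,P)g(X,Z) + g(Z,P)g(X,Y)`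
    S.Khat P X Y Z + S.Khat P X Z Y
      = S.D X (S.gf Y Z) + S.gf Y P * S.gf X Z + S.gf Z P * S.gf X Y ∧
    -- (6) `K̂(X,Y,Z) − K̂(Y,X,Z) = ⟨[X,Y] + g(Y,P)X − g(X,P)Y, Z⟩`
    S.Khat P X Y Z - S.Khat P Y X Z
      = S.gf ((S.bracket X Y + fun p => S.gf Y P p • X p) - fun p => S.gf X P p • Y p) Z ∧
    -- (7) `K̂(X,Y,Z) + K̂(Z,Y,X) = (L_Y g)(Z,X) + 2g(Y,P)g(X,Z)`
    S.Khat P X Y Z + S.Khat P Z Y X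
      = S.lieD Y Z X + (2 : ℝ) • (S.gf Y P * S.gf X Z) ∧
    -- (8) `K̂(X,Y,Z) + K̂(Y,Z,X)
    --        = Y⟨Z,X⟩ + ⟨[X,Y],Z⟩ + g(Y,P)g(X,Z) + g(Z,P)g(X,Y)`
    S.Khat P X Y Z + S.Khat P Y Z X
      = S.D Y (S.gf Z X) + S.gf (S.bracket X Y) Z
        + S.gf Y P * S.gf X Z + S.gf Z P * S.gf X Y := by
  have hgYZ := S.g_smooth Y Z hY hZ
  have hgZX := S.g_smooth Z X hZ hX
  have hgXY := S.g_smooth X Y hX hY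
  -- additivity in the first slot
  have add1 : ∀ X', S.IsVF X' →
      S.Khat P (X + X') Y Z = S.Khat P X Y Z + S.Khat P X' Y Z := by
    intro X' hX'
    unfold SSRM.Khat SSRM.K
    rw [S.D_add_vf X X' (S.gf Y Z) hX hX' hgYZ,
      S.gf_add_right' Z X X',
      S.D_add_fn Y (S.gf Z X) (S.gf Z X') hY (S.g_smooth Z X hZ hX) (S.g_smooth Z X' hZ hX'),
      S.gf_add_left' X X' Y,
      S.D_add_fn Z (S.gf X Y) (S.gf X' Y) hZ (S.g_smooth X Y hX hY) (S.g_smooth X' Y hX' hY),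
      S.gf_add_left' X X' (S.bracket Y Z),
      S.bracket_add_right' Z X X' hZ hX hX', S.gf_add_right' Y _ _,
      S.bracket_add_left X X' Y hX hX' hY, S.gf_add_right' Z _ _,
      S.gf_add_left' X X' Z]
    funext p
    simp only [Pi.add_apply, Pi.sub_apply, Pi.smul_apply, Pi.mul_apply, smul_eq_mul]
    ring
  -- additivity in the second slot
  have add2 : ∀ Y', S.IsVF Y' →
      S.Khat P X (Y + Y') Z = S.Khat P X Y Z + S.Khat P X Y' Z := by
    intro Y' hY'
    unfold SSRM.Khat SSRM.K
    rw [S.gf_add_left' Y Y' Z,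
      S.D_add_fn X (S.gf Y Z) (S.gf Y' Z) hX (S.g_smooth Y Z hY hZ) (S.g_smooth Y' Z hY' hZ),
      S.D_add_vf Y Y' (S.gf Z X) hY hY' hgZX,
      S.gf_add_right' X Y Y',
      S.D_add_fn Z (S.gf X Y) (S.gf X Y') hZ (S.g_smooth X Y hX hY) (S.g_smooth X Y' hX hY'),
      S.bracket_add_left Y Y' Z hY hY' hZ, S.gf_add_right' X _ _,
      S.gf_add_left' Y Y' (S.bracket Z X),
      S.bracket_add_right' X Y Y' hX hY hY', S.gf_add_right' Z _ _,
      S.gf_add_left' Y Y' P]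
    funext p
    simp only [Pi.add_apply, Pi.sub_apply, Pi.smul_apply, Pi.mul_apply, smul_eq_mul]
    ring
  -- additivity in the third slot
  have add3 : ∀ Z', S.IsVF Z' →
      S.Khat P X Y (Z + Z') = S.Khat P X Y Z + S.Khat P X Y Z' := by
    intro Z' hZ'
    unfold SSRM.Khat SSRM.K
    rw [S.gf_add_right' Y Z Z',
      S.D_add_fn X (S.gf Y Z) (S.gf Y Z') hX (S.g_smooth Y Z hY hZ) (S.g_smooth Y Z' hY hZ'),
      S.gf_add_left' Z Z' X,
      S.D_add_fn Y (S.gf Z X) (S.gf Z' X) hY (S.g_smooth Z X hZ hX) (S.g_smooth Z' X hZ' hX),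
      S.D_add_vf Z Z' (S.gf X Y) hZ hZ' hgXY,
      S.bracket_add_right' Y Z Z' hY hZ hZ', S.gf_add_right' X _ _,
      S.bracket_add_left Z Z' X hZ hZ' hX, S.gf_add_left' _ _ (S.bracket X Y),
      S.gf_add_right' Y (S.bracket Z X) (S.bracket Z' X), S.gf_add_right' X Z Z']
    funext p
    simp only [Pi.add_apply, Pi.sub_apply, Pi.smul_apply, Pi.mul_apply, smul_eq_mul]
    ring
  -- homogeneity in the first slot
  have hom2 : ∀ a : M → ℝ, S.IsFn a →
      S.Khat P (fun p => a p • X p) Y Z = a * S.Khat P X Y Z := by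
    intro a ha
    unfold SSRM.Khat SSRM.K
    rw [S.D_smul_vf a X (S.gf Y Z) ha hX hgYZ,
      S.gf_smul_right' Z a X, S.D_mul_fn Y a (S.gf Z X) hY ha hgZX,
      S.gf_smul_left' a X Y, S.D_mul_fn Z a (S.gf X Y) hZ ha hgXY,
      S.gf_smul_left' a X (S.bracket Y Z),
      S.bracket_leibniz Z a X hZ ha hX, S.gf_add_right' Y _ _,
      S.gf_smul_right' Y a (S.bracket Z X), S.gf_smul_right' Y (S.D Z a) X,
      S.bracket_smul_left' a X Y ha hX hY, S.gf_sub_right' Z _ _,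
      S.gf_smul_right' Z a (S.bracket X Y), S.gf_smul_right' Z (S.D Y a) X,
      S.gf_smul_left' a X Z, S.gf_symm' Y X]
    funext p
    simp only [Pi.add_apply, Pi.sub_apply, Pi.smul_apply, Pi.mul_apply, smul_eq_mul]
    ring
  -- homogeneity in the second slot
  have hom3 : ∀ a : M → ℝ, S.IsFn a →
      S.Khat P X (fun p => a p • Y p) Z
        = a * S.Khat P X Y Z + S.D X a * S.gf Y Z := by
    intro a ha
    unfold SSRM.Khat SSRM.K
    rw [S.gf_smul_left' a Y Z, S.D_mul_fn X a (S.gf Y Z) hX ha hgYZ,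
      S.D_smul_vf a Y (S.gf Z X) ha hY hgZX,
      S.gf_smul_right' X a Y, S.D_mul_fn Z a (S.gf X Y) hZ ha hgXY,
      S.bracket_smul_left' a Y Z ha hY hZ, S.gf_sub_right' X _ _,
      S.gf_smul_right' X a (S.bracket Y Z), S.gf_smul_right' X (S.D Z a) Y,
      S.gf_smul_left' a Y (S.bracket Z X),
      S.bracket_leibniz X a Y hX ha hY, S.gf_add_right' Z _ _,
      S.gf_smul_right' Z a (S.bracket X Y), S.gf_smul_right' Z (S.D X a) Y,
      S.gf_smul_left' a Y P, S.gf_symm' Z Y]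
    funext p
    simp only [Pi.add_apply, Pi.sub_apply, Pi.smul_apply, Pi.mul_apply, smul_eq_mul]
    ring
  -- homogeneity in the third slot
  have hom4 : ∀ a : M → ℝ, S.IsFn a →
      S.Khat P X Y (fun p => a p • Z p) = a * S.Khat P X Y Z := by
    intro a ha
    unfold SSRM.Khat SSRM.K
    rw [S.gf_smul_right' Y a Z, S.D_mul_fn X a (S.gf Y Z) hX ha hgYZ,
      S.gf_smul_left' a Z X, S.D_mul_fn Y a (S.gf Z X) hY ha hgZX,
      S.D_smul_vf a Z (S.gf X Y) ha hZ hgXY,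
      S.bracket_leibniz Y a Z hY ha hZ, S.gf_add_right' X _ _,
      S.gf_smul_right' X a (S.bracket Y Z), S.gf_smul_right' X (S.D Y a) Z,
      S.bracket_smul_left' a Z X ha hZ hX]
    rw [show S.gf Y ((fun p => a p • S.bracket Z X p) - fun p => S.D X a p • Z p)
        = a * S.gf Y (S.bracket Z X) - S.D X a * S.gf Y Z by
      rw [S.gf_sub_right' Y _ _, S.gf_smul_right' Y a (S.bracket Z X),
        S.gf_smul_right' Y (S.D X a) Z]]
    rw [S.gf_smul_left' a Z (S.bracket X Y), S.gf_smul_right' X a Z, S.gf_symm' X Z]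
    funext p
    simp only [Pi.add_apply, Pi.sub_apply, Pi.smul_apply, Pi.mul_apply, smul_eq_mul]
    ring
  refine ⟨add1, add2, add3, ?_, ?_, ?_, hom2 f hf, hom3 f hf, hom4 f hf, ?_, ?_, ?_, ?_⟩
  · -- r-smul in the first slot
    intro r
    have e := hom2 (fun _ => r) (S.fn_const r)
    funext p
    have h := congrFun e p
    simp only [Pi.mul_apply, Pi.smul_apply, smul_eq_mul] at h ⊢
    exact h
  · intro r
    have e := hom3 (fun _ => r) (S.fn_const r)
    rw [S.D_const X r hX, zero_mul, add_zero] at e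
    funext p
    have h := congrFun e p
    simp only [Pi.mul_apply, Pi.smul_apply, smul_eq_mul] at h ⊢
    exact h
  · intro r
    have e := hom4 (fun _ => r) (S.fn_const r)
    funext p
    have h := congrFun e p
    simp only [Pi.mul_apply, Pi.smul_apply, smul_eq_mul] at h ⊢
    exact h
  · -- (5)
    unfold SSRM.Khat SSRM.K
    rw [S.gf_symm' Z Y, S.gf_symm' X Z, S.gf_symm' Y X,
      S.bracket_antisymm Z Y hZ hY, S.gf_neg_right' X _,
      S.bracket_antisymm Y X hY hX, S.gf_neg_right' Z _,
      S.bracket_antisymm X Z hX hZ, S.gf_neg_right' Y _]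
    funext p
    simp only [Pi.add_apply, Pi.sub_apply, Pi.neg_apply, Pi.smul_apply, Pi.mul_apply,
      smul_eq_mul]
    ring
  · -- (6)
    unfold SSRM.Khat SSRM.K
    rw [S.gf_sub_left', S.gf_add_left', S.gf_smul_left' (S.gf Y P) X Z,
      S.gf_smul_left' (S.gf X P) Y Z,
      S.gf_symm' X Z, S.gf_symm' Z Y, S.gf_symm' Y X,
      S.bracket_antisymm X Z hX hZ, S.gf_neg_right' Y _,
      S.bracket_antisymm Z Y hZ hY, S.gf_neg_right' X _,
      S.bracket_antisymm Y X hY hX, S.gf_neg_right' Z _,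
      S.gf_symm' (S.bracket X Y) Z]
    funext p
    simp only [Pi.add_apply, Pi.sub_apply, Pi.neg_apply, Pi.smul_apply, Pi.mul_apply,
      smul_eq_mul]
    ring
  · -- (7)
    unfold SSRM.Khat SSRM.K SSRM.lieD
    rw [S.gf_symm' X Z, S.gf_symm' Y X, S.gf_symm' Z Y,
      S.bracket_antisymm Y X hY hX, S.gf_neg_right' Z _,
      S.bracket_antisymm X Z hX hZ, S.gf_neg_right' Y _,
      S.bracket_antisymm Z Y hZ hY, S.gf_neg_right' X _,
      S.gf_symm' (S.bracket Y Z) X]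
    funext p
    simp only [Pi.add_apply, Pi.sub_apply, Pi.neg_apply, Pi.smul_apply, Pi.mul_apply,
      smul_eq_mul]
    ring
  · -- (8)
    unfold SSRM.Khat SSRM.K
    rw [S.gf_symm' (S.bracket X Y) Z, S.gf_symm' Y X]
    funext p
    simp only [Pi.add_apply, Pi.sub_apply, Pi.smul_apply, Pi.mul_apply, smul_eq_mul]
    ring
end
end

section
/- Let B×_f F be a (possibly degenerate) warped product of singular semi-Riemannian manifolds (B,g_B) and (F,g_F) with warping function f ∈ C^∞(B), let X,Y,Z be vector fields on B and U,V,W vector fields on F (identified with their lifts), and let P be a vector field on B. Let K̂ be the semi-symmetric non-metric Koszul form of B×_f F with respect to P, K̂_B that of (B,g_B) with respect to P, and K_F the Koszul form of (F,g_F). Then: (1) K̂(X,Y,Z) = K̂_B(X,Y,Z); (2) K̂(X,Y,W) = K̂(X,W,Y) = K̂(W,X,Y) = 0; (3) K̂(X,V,W) = −K̂(V,W,X) = f·g_F(V,W)·X(f); (4) K̂(V,X,W) = f·g_F(V,W)·X(f) + f²·g_B(X,P)·g_F(V,W); (5) K̂(U,V,W) = f²·K_F(U,V,W). -/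
noncomputable section

/-- Proposition 3.13: the semi-symmetric non-metric Koszul form of
a (possibly degenerate) warped product `B ×_f F`, with respect to a vector field
`P ∈ Γ(TB)`, on lifts of vector fields `X,Y,Z ∈ Γ(TB)` and `U,V,W ∈ Γ(TF)`, in
terms of the data on the factors. -/
theorem semiSymmetricNonMetricKoszul_warpedProduct_baseP
    {MB MF : Type*} {TB : MB → Type*} {TF : MF → Type*}
    [∀ p, AddCommGroup (TB p)] [∀ p, Module ℝ (TB p)]
    [∀ q, AddCommGroup (TF q)] [∀ q, Module ℝ (TF q)]
    (B : SSRM MB TB) (F : SSRM MF TF) (f : MB → ℝ)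
    (Wp : SSRM (MB × MF) fun pq => TB pq.1 × TF pq.2)
    (hWp : SSRM.IsWarpedProduct B F f Wp)
    (X Y Z P : ∀ p, TB p) (hX : B.IsVF X) (hY : B.IsVF Y) (hZ : B.IsVF Z)
    (hP : B.IsVF P)
    (U V W : ∀ q, TF q) (hU : F.IsVF U) (hV : F.IsVF V) (hW : F.IsVF W) :
    -- (1) `K̂(X,Y,Z) = K̂_B(X,Y,Z)`
    Wp.Khat (SSRM.liftB P) (SSRM.liftB X) (SSRM.liftB Y) (SSRM.liftB Z)
      = (fun pq => B.Khat P X Y Z pq.1) ∧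
    -- (2) `K̂(X,Y,W) = K̂(X,W,Y) = K̂(W,X,Y) = 0`
    Wp.Khat (SSRM.liftB P) (SSRM.liftB X) (SSRM.liftB Y) (SSRM.liftF W) = 0 ∧
    Wp.Khat (SSRM.liftB P) (SSRM.liftB X) (SSRM.liftF W) (SSRM.liftB Y) = 0 ∧
    Wp.Khat (SSRM.liftB P) (SSRM.liftF W) (SSRM.liftB X) (SSRM.liftB Y) = 0 ∧
    -- (3) `K̂(X,V,W) = −K̂(V,W,X) = f·g_F(V,W)·X(f)`
    Wp.Khat (SSRM.liftB P) (SSRM.liftB X) (SSRM.liftF V) (SSRM.liftF W)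
      = -Wp.Khat (SSRM.liftB P) (SSRM.liftF V) (SSRM.liftF W) (SSRM.liftB X) ∧
    Wp.Khat (SSRM.liftB P) (SSRM.liftB X) (SSRM.liftF V) (SSRM.liftF W)
      = (fun pq => f pq.1 * F.gf V W pq.2 * B.D X f pq.1) ∧
    -- (4) `K̂(V,X,W) = f·g_F(V,W)·X(f) + f²·g_B(X,P)·g_F(V,W)`
    Wp.Khat (SSRM.liftB P) (SSRM.liftF V) (SSRM.liftB X) (SSRM.liftF W)
      = (fun pq => f pq.1 * F.gf V W pq.2 * B.D X f pq.1
          + f pq.1 ^ 2 * B.gf X P pq.1 * F.gf V W pq.2) ∧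
    -- (5) `K̂(U,V,W) = f²·K_F(U,V,W)`
    Wp.Khat (SSRM.liftB P) (SSRM.liftF U) (SSRM.liftF V) (SSRM.liftF W)
      = (fun pq => f pq.1 ^ 2 * F.K U V W pq.2) := by

  classical
  -- pointwise metric computations
  have hBB : ∀ A C : ∀ p, TB p, Wp.gf (SSRM.liftB A) (SSRM.liftB C) = fun pq => B.gf A C pq.1 := by
    intro A C; funext pq
    simp [SSRM.gf, SSRM.liftB, hWp.metric]
  have hBF : ∀ (A : ∀ p, TB p) (Uu : ∀ q, TF q), Wp.gf (SSRM.liftB A) (SSRM.liftF Uu) = 0 := by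
    intro A Uu; funext pq
    simp [SSRM.gf, SSRM.liftB, SSRM.liftF, hWp.metric]
  have hFB : ∀ (Uu : ∀ q, TF q) (A : ∀ p, TB p), Wp.gf (SSRM.liftF Uu) (SSRM.liftB A) = 0 := by
    intro Uu A; funext pq
    simp [SSRM.gf, SSRM.liftB, SSRM.liftF, hWp.metric]
  have hFF : ∀ Uu Vv : ∀ q, TF q,
      Wp.gf (SSRM.liftF Uu) (SSRM.liftF Vv)
        = (fun pq : MB × MF => f pq.1 ^ 2) * fun pq => F.gf Uu Vv pq.2 := by
    intro Uu Vv; funext pq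
    simp [SSRM.gf, SSRM.liftF, hWp.metric]
  have hgf0 : ∀ A : ∀ pq : MB × MF, TB pq.1 × TF pq.2, Wp.gf A 0 = 0 := by
    intro A; funext pq; simp [SSRM.gf]
  -- smoothness facts
  have hf2 : B.IsFn fun p => f p ^ 2 := by
    have h := B.fn_mul f f hWp.smooth_f hWp.smooth_f
    have : (fun p => f p ^ 2) = f * f := by funext p; exact pow_two (f p)
    rw [this]; exact h
  have hDf2 : ∀ A : ∀ p, TB p, B.IsVF A →
      B.D A (fun p => f p ^ 2) = B.D A f * f + f * B.D A f := by
    intro A hA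
    have : (fun p => f p ^ 2) = f * f := by funext p; exact pow_two (f p)
    rw [this]; exact B.D_mul_fn A f f hA hWp.smooth_f hWp.smooth_f
  -- extra bracket
  have hbFB : ∀ (Uu : ∀ q, TF q) (A : ∀ p, TB p), F.IsVF Uu → B.IsVF A →
      Wp.bracket (SSRM.liftF Uu) (SSRM.liftB A) = 0 := by
    intro Uu A hUu hA
    rw [Wp.bracket_antisymm _ _ (hWp.vf_liftF Uu hUu) (hWp.vf_liftB A hA),
      hWp.bracket_BF A Uu hA hUu, neg_zero]
  -- derivative computations
  have hD0 : ∀ A : ∀ pq : MB × MF, TB pq.1 × TF pq.2, Wp.IsVF A → Wp.D A 0 = 0 := by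
    intro A hA; exact Wp.D_const A 0 hA
  have hDB_BB : ∀ A C E : ∀ p, TB p, B.IsVF A → B.IsVF C → B.IsVF E →
      Wp.D (SSRM.liftB A) (fun pq => B.gf C E pq.1) = fun pq => B.D A (B.gf C E) pq.1 := by
    intro A C E hA hC hE
    exact hWp.D_liftB_fnB A (B.gf C E) hA (B.g_smooth C E hC hE)
  have hDF_BB : ∀ (Uu : ∀ q, TF q) (C E : ∀ p, TB p), F.IsVF Uu → B.IsVF C → B.IsVF E →
      Wp.D (SSRM.liftF Uu) (fun pq => B.gf C E pq.1) = 0 := by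
    intro Uu C E hUu hC hE
    exact hWp.D_liftF_fnB Uu (B.gf C E) hUu (B.g_smooth C E hC hE)
  have hDB_FF : ∀ (A : ∀ p, TB p) (Vv Ww : ∀ q, TF q), B.IsVF A → F.IsVF Vv → F.IsVF Ww →
      Wp.D (SSRM.liftB A) ((fun pq : MB × MF => f pq.1 ^ 2) * fun pq => F.gf Vv Ww pq.2)
        = fun pq => (B.D A f pq.1 * f pq.1 + f pq.1 * B.D A f pq.1) * F.gf Vv Ww pq.2 := by
    intro A Vv Ww hA hVv hWw
    rw [Wp.D_mul_fn (SSRM.liftB A) (fun pq => f pq.1 ^ 2) (fun pq => F.gf Vv Ww pq.2)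
        (hWp.vf_liftB A hA) (hWp.fn_liftB _ hf2)
        (hWp.fn_liftF _ (F.g_smooth Vv Ww hVv hWw)),
      hWp.D_liftB_fnB A (fun p => f p ^ 2) hA hf2,
      hWp.D_liftB_fnF A (F.gf Vv Ww) hA (F.g_smooth Vv Ww hVv hWw)]
    funext pq
    simp [hDf2 A hA]
  have hDF_FF : ∀ Uu Vv Ww : ∀ q, TF q, F.IsVF Uu → F.IsVF Vv → F.IsVF Ww →
      Wp.D (SSRM.liftF Uu) ((fun pq : MB × MF => f pq.1 ^ 2) * fun pq => F.gf Vv Ww pq.2)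
        = fun pq => f pq.1 ^ 2 * F.D Uu (F.gf Vv Ww) pq.2 := by
    intro Uu Vv Ww hUu hVv hWw
    rw [Wp.D_mul_fn (SSRM.liftF Uu) (fun pq => f pq.1 ^ 2) (fun pq => F.gf Vv Ww pq.2)
        (hWp.vf_liftF Uu hUu) (hWp.fn_liftB _ hf2)
        (hWp.fn_liftF _ (F.g_smooth Vv Ww hVv hWw)),
      hWp.D_liftF_fnB Uu (fun p => f p ^ 2) hUu hf2,
      hWp.D_liftF_fnF Uu (F.gf Vv Ww) hUu (F.g_smooth Vv Ww hVv hWw)]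
    funext pq
    simp
  refine ⟨?_, ?_, ?_, ?_, ?_, ?_, ?_, ?_⟩
  · -- (1)
    funext pq
    simp only [SSRM.Khat, SSRM.K, hWp.bracket_BB Y Z hY hZ, hWp.bracket_BB Z X hZ hX,
      hWp.bracket_BB X Y hX hY, hBB, hDB_BB X Y Z hX hY hZ, hDB_BB Y Z X hY hZ hX,
      hDB_BB Z X Y hZ hX hY, Pi.add_apply, Pi.sub_apply, Pi.smul_apply, Pi.mul_apply,
      smul_eq_mul]
  · -- (2a)
    funext pq
    simp only [SSRM.Khat, SSRM.K, hWp.bracket_BF Y W hY hW, hbFB W X hW hX,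
      hWp.bracket_BB X Y hX hY, hBB, hBF, hFB, hgf0,
      hD0 _ (hWp.vf_liftB X hX), hD0 _ (hWp.vf_liftB Y hY),
      hDF_BB W X Y hW hX hY, Pi.add_apply, Pi.sub_apply, Pi.smul_apply, Pi.mul_apply,
      Pi.zero_apply, smul_eq_mul]
    ring
  · -- (2b)
    funext pq
    simp only [SSRM.Khat, SSRM.K, hbFB W Y hW hY, hWp.bracket_BB Y X hY hX,
      hWp.bracket_BF X W hX hW, hBB, hBF, hFB, hgf0,
      hD0 _ (hWp.vf_liftB X hX), hD0 _ (hWp.vf_liftB Y hY),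
      hDF_BB W Y X hW hY hX, Pi.add_apply, Pi.sub_apply, Pi.smul_apply, Pi.mul_apply,
      Pi.zero_apply, smul_eq_mul]
    ring
  · -- (2c)
    funext pq
    simp only [SSRM.Khat, SSRM.K, hWp.bracket_BF Y W hY hW,
      hbFB W X hW hX, hWp.bracket_BB X Y hX hY, hBB, hBF, hFB, hgf0,
      hD0 _ (hWp.vf_liftB X hX), hD0 _ (hWp.vf_liftB Y hY),
      hDF_BB W X Y hW hX hY, Pi.add_apply, Pi.sub_apply, Pi.smul_apply, Pi.mul_apply,
      Pi.zero_apply, smul_eq_mul]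
    ring
  · -- (3) antisymmetry form
    funext pq
    simp only [SSRM.Khat, SSRM.K, hWp.bracket_FF V W hV hW, hbFB W X hW hX,
      hWp.bracket_BF X V hX hV, hBF, hFB, hFF, hgf0,
      hD0 _ (hWp.vf_liftF V hV), hD0 _ (hWp.vf_liftF W hW),
      hDB_FF X V W hX hV hW, Pi.add_apply, Pi.sub_apply, Pi.smul_apply, Pi.mul_apply,
      Pi.zero_apply, Pi.neg_apply, smul_eq_mul]
    ring
  · -- (3) value
    funext pq
    simp only [SSRM.Khat, SSRM.K, hWp.bracket_FF V W hV hW, hbFB W X hW hX,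
      hWp.bracket_BF X V hX hV, hBF, hFB, hFF, hgf0,
      hD0 _ (hWp.vf_liftF V hV), hD0 _ (hWp.vf_liftF W hW),
      hDB_FF X V W hX hV hW, Pi.add_apply, Pi.sub_apply, Pi.smul_apply, Pi.mul_apply,
      Pi.zero_apply, smul_eq_mul]
    ring
  · -- (4)
    have hsymm : F.gf W V = F.gf V W := funext fun q => F.g_symm q (W q) (V q)
    funext pq
    simp only [SSRM.Khat, SSRM.K, hWp.bracket_BF X W hX hW, hWp.bracket_FF W V hW hV,
      hbFB V X hV hX, hBB, hBF, hFB, hFF, hgf0,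
      hD0 _ (hWp.vf_liftF V hV), hD0 _ (hWp.vf_liftF W hW),
      hDB_FF X W V hX hW hV, hDB_FF X V W hX hV hW, hsymm, Pi.add_apply, Pi.sub_apply, Pi.smul_apply,
      Pi.mul_apply, Pi.zero_apply, smul_eq_mul]
    ring
  · -- (5)
    funext pq
    simp only [SSRM.Khat, SSRM.K, hWp.bracket_FF V W hV hW, hWp.bracket_FF W U hW hU,
      hWp.bracket_FF U V hU hV, hFF, hFB, hgf0,
      hDF_FF U V W hU hV hW, hDF_FF V W U hV hW hU, hDF_FF W U V hW hU hV,
      Pi.add_apply, Pi.sub_apply, Pi.smul_apply, Pi.mul_apply, Pi.zero_apply,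
      smul_eq_mul]
    ring
end
end

section
/- Let B×_f F be a (possibly degenerate) warped product of singular semi-Riemannian manifolds (B,g_B) and (F,g_F) with warping function f ∈ C^∞(B), let X,Y,Z be vector fields on B and U,V,W vector fields on F (identified with their lifts), and let P be a vector field on F. Let K̂ be the semi-symmetric non-metric Koszul form of B×_f F with respect to P, K_B the Koszul form of (B,g_B), and K_F that of (F,g_F). Then: (1) K̂(X,Y,Z) = K_B(X,Y,Z); (2) K̂(X,Y,W) = K̂(W,X,Y) = 0; (3) K̂(X,W,Y) = f²·g_B(X,Y)·g_F(P,W); (4) K̂(X,V,W) = K̂(V,X,W) = −K̂(V,W,X) = f·g_F(V,W)·X(f); (5) K̂(U,V,W) = f²·K_F(U,V,W) + f⁴·g_F(V,P)·g_F(U,W). -/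
noncomputable section

section WarpAux

open SSRM

variable {MB MF : Type*} {TB : MB → Type*} {TF : MF → Type*}
  [∀ p, AddCommGroup (TB p)] [∀ p, Module ℝ (TB p)]
  [∀ q, AddCommGroup (TF q)] [∀ q, Module ℝ (TF q)]
  {B : SSRM MB TB} {F : SSRM MF TF} {f : MB → ℝ}
  {Wp : SSRM (MB × MF) fun pq => TB pq.1 × TF pq.2}

lemma SSRM.D_zero_fn {M : Type*} {T : M → Type*} [∀ p, AddCommGroup (T p)]
    [∀ p, Module ℝ (T p)] (S : SSRM M T) {A : ∀ p, T p} (hA : S.IsVF A) :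
    S.D A 0 = 0 :=
  S.D_const A 0 hA

lemma gf_lb_lb (hWp : IsWarpedProduct B F f Wp) (X Y : ∀ p, TB p) :
    Wp.gf (liftB X) (liftB Y) = fun pq => B.gf X Y pq.1 := by
  funext pq
  simp [SSRM.gf, liftB, hWp.metric]

lemma gf_lb_lf (hWp : IsWarpedProduct B F f Wp) (X : ∀ p, TB p) (U : ∀ q, TF q) :
    Wp.gf (liftB X) (liftF U) = 0 := by
  funext pq
  simp [SSRM.gf, liftB, liftF, hWp.metric]

lemma gf_lf_lb (hWp : IsWarpedProduct B F f Wp) (U : ∀ q, TF q) (X : ∀ p, TB p) :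
    Wp.gf (liftF U) (liftB X) = 0 := by
  funext pq
  simp [SSRM.gf, liftB, liftF, hWp.metric]

lemma gf_lf_lf (hWp : IsWarpedProduct B F f Wp) (U V : ∀ q, TF q) :
    Wp.gf (liftF U) (liftF V) = fun pq => f pq.1 ^ 2 * F.gf U V pq.2 := by
  funext pq
  simp [SSRM.gf, liftF, hWp.metric]

lemma gf_zero_right (A : ∀ pq : MB × MF, TB pq.1 × TF pq.2) :
    Wp.gf A 0 = 0 := by
  funext pq
  simp [SSRM.gf]

lemma br_FB (hWp : IsWarpedProduct B F f Wp) {U : ∀ q, TF q} {X : ∀ p, TB p}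
    (hU : F.IsVF U) (hX : B.IsVF X) :
    Wp.bracket (liftF U) (liftB X) = 0 := by
  rw [Wp.bracket_antisymm _ _ (hWp.vf_liftF U hU) (hWp.vf_liftB X hX),
    hWp.bracket_BF X U hX hU, neg_zero]

lemma dB_gfBB (hWp : IsWarpedProduct B F f Wp) {X Y Z : ∀ p, TB p}
    (hX : B.IsVF X) (hY : B.IsVF Y) (hZ : B.IsVF Z) :
    Wp.D (liftB X) (Wp.gf (liftB Y) (liftB Z)) = fun pq => B.D X (B.gf Y Z) pq.1 := by
  rw [gf_lb_lb hWp]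
  exact hWp.D_liftB_fnB X (B.gf Y Z) hX (B.g_smooth Y Z hY hZ)

lemma dF_gfBB (hWp : IsWarpedProduct B F f Wp) {U : ∀ q, TF q} {Y Z : ∀ p, TB p}
    (hU : F.IsVF U) (hY : B.IsVF Y) (hZ : B.IsVF Z) :
    Wp.D (liftF U) (Wp.gf (liftB Y) (liftB Z)) = 0 := by
  rw [gf_lb_lb hWp]
  exact hWp.D_liftF_fnB U (B.gf Y Z) hU (B.g_smooth Y Z hY hZ)

lemma dB_gfFF (hWp : IsWarpedProduct B F f Wp) {X : ∀ p, TB p} {V W : ∀ q, TF q}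
    (hX : B.IsVF X) (hV : F.IsVF V) (hW : F.IsVF W) :
    Wp.D (liftB X) (Wp.gf (liftF V) (liftF W))
      = fun pq => 2 * (f pq.1 * B.D X f pq.1) * F.gf V W pq.2 := by
  rw [gf_lf_lf hWp]
  have hff : B.IsFn (f * f) := B.fn_mul f f hWp.smooth_f hWp.smooth_f
  have hgVW : F.IsFn (F.gf V W) := F.g_smooth V W hV hW
  have h1 : (fun pq : MB × MF => f pq.1 ^ 2 * F.gf V W pq.2)
      = (fun pq : MB × MF => (f * f) pq.1) * (fun pq : MB × MF => F.gf V W pq.2) := by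
    funext pq
    simp only [Pi.mul_apply]
    ring
  rw [h1, Wp.D_mul_fn _ _ _ (hWp.vf_liftB X hX) (hWp.fn_liftB _ hff) (hWp.fn_liftF _ hgVW),
    hWp.D_liftB_fnB X _ hX hff, hWp.D_liftB_fnF X _ hX hgVW]
  funext pq
  have h2 := congrFun (B.D_mul_fn X f f hX hWp.smooth_f hWp.smooth_f) pq.1
  simp only [Pi.add_apply, Pi.mul_apply, Pi.zero_apply] at h2 ⊢
  rw [h2]
  ring

lemma dF_gfFF (hWp : IsWarpedProduct B F f Wp) {U V W : ∀ q, TF q}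
    (hU : F.IsVF U) (hV : F.IsVF V) (hW : F.IsVF W) :
    Wp.D (liftF U) (Wp.gf (liftF V) (liftF W))
      = fun pq => f pq.1 ^ 2 * F.D U (F.gf V W) pq.2 := by
  rw [gf_lf_lf hWp]
  have hff : B.IsFn (f * f) := B.fn_mul f f hWp.smooth_f hWp.smooth_f
  have hgVW : F.IsFn (F.gf V W) := F.g_smooth V W hV hW
  have h1 : (fun pq : MB × MF => f pq.1 ^ 2 * F.gf V W pq.2)
      = (fun pq : MB × MF => (f * f) pq.1) * (fun pq : MB × MF => F.gf V W pq.2) := by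
    funext pq
    simp only [Pi.mul_apply]
    ring
  rw [h1, Wp.D_mul_fn _ _ _ (hWp.vf_liftF U hU) (hWp.fn_liftB _ hff) (hWp.fn_liftF _ hgVW),
    hWp.D_liftF_fnB U _ hU hff, hWp.D_liftF_fnF U _ hU hgVW]
  funext pq
  simp only [Pi.add_apply, Pi.mul_apply, Pi.zero_apply]
  ring

end WarpAux



/-- Proposition 3.14: the semi-symmetric non-metric Koszul form of
a (possibly degenerate) warped product `B ×_f F`, with respect to a vector field
`P ∈ Γ(TF)`, on lifts of vector fields `X,Y,Z ∈ Γ(TB)` and `U,V,W ∈ Γ(TF)`, in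
terms of the data on the factors. -/
theorem semiSymmetricNonMetricKoszul_warpedProduct_fiberP
    {MB MF : Type*} {TB : MB → Type*} {TF : MF → Type*}
    [∀ p, AddCommGroup (TB p)] [∀ p, Module ℝ (TB p)]
    [∀ q, AddCommGroup (TF q)] [∀ q, Module ℝ (TF q)]
    (B : SSRM MB TB) (F : SSRM MF TF) (f : MB → ℝ)
    (Wp : SSRM (MB × MF) fun pq => TB pq.1 × TF pq.2)
    (hWp : SSRM.IsWarpedProduct B F f Wp)
    (X Y Z : ∀ p, TB p) (hX : B.IsVF X) (hY : B.IsVF Y) (hZ : B.IsVF Z)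
    (P : ∀ q, TF q) (hP : F.IsVF P)
    (U V W : ∀ q, TF q) (hU : F.IsVF U) (hV : F.IsVF V) (hW : F.IsVF W) :
    -- (1) `K̂(X,Y,Z) = K_B(X,Y,Z)`
    Wp.Khat (SSRM.liftF P) (SSRM.liftB X) (SSRM.liftB Y) (SSRM.liftB Z)
      = (fun pq => B.K X Y Z pq.1) ∧
    -- (2) `K̂(X,Y,W) = K̂(W,X,Y) = 0`
    Wp.Khat (SSRM.liftF P) (SSRM.liftB X) (SSRM.liftB Y) (SSRM.liftF W) = 0 ∧
    Wp.Khat (SSRM.liftF P) (SSRM.liftF W) (SSRM.liftB X) (SSRM.liftB Y) = 0 ∧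
    -- (3) `K̂(X,W,Y) = f²·g_B(X,Y)·g_F(P,W)`
    Wp.Khat (SSRM.liftF P) (SSRM.liftB X) (SSRM.liftF W) (SSRM.liftB Y)
      = (fun pq => f pq.1 ^ 2 * B.gf X Y pq.1 * F.gf P W pq.2) ∧
    -- (4) `K̂(X,V,W) = K̂(V,X,W) = −K̂(V,W,X) = f·g_F(V,W)·X(f)`
    Wp.Khat (SSRM.liftF P) (SSRM.liftB X) (SSRM.liftF V) (SSRM.liftF W)
      = Wp.Khat (SSRM.liftF P) (SSRM.liftF V) (SSRM.liftB X) (SSRM.liftF W) ∧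
    Wp.Khat (SSRM.liftF P) (SSRM.liftF V) (SSRM.liftB X) (SSRM.liftF W)
      = -Wp.Khat (SSRM.liftF P) (SSRM.liftF V) (SSRM.liftF W) (SSRM.liftB X) ∧
    Wp.Khat (SSRM.liftF P) (SSRM.liftB X) (SSRM.liftF V) (SSRM.liftF W)
      = (fun pq => f pq.1 * F.gf V W pq.2 * B.D X f pq.1) ∧
    -- (5) `K̂(U,V,W) = f²·K_F(U,V,W) + f⁴·g_F(V,P)·g_F(U,W)`
    Wp.Khat (SSRM.liftF P) (SSRM.liftF U) (SSRM.liftF V) (SSRM.liftF W)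
      = (fun pq => f pq.1 ^ 2 * F.K U V W pq.2
          + f pq.1 ^ 4 * F.gf V P pq.2 * F.gf U W pq.2) := by
  have hlX := hWp.vf_liftB X hX
  have hlY := hWp.vf_liftB Y hY
  have hlZ := hWp.vf_liftB Z hZ
  have hlU := hWp.vf_liftF U hU
  have hlV := hWp.vf_liftF V hV
  have hlW := hWp.vf_liftF W hW
  have gsymWP : F.gf W P = F.gf P W := by
    funext q; exact F.g_symm q _ _
  have gsymWV : F.gf W V = F.gf V W := by
    funext q; exact F.g_symm q _ _
  have h1 : Wp.Khat (SSRM.liftF P) (SSRM.liftB X) (SSRM.liftB Y) (SSRM.liftB Z)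
      = (fun pq => B.K X Y Z pq.1) := by
    unfold SSRM.Khat SSRM.K
    rw [dB_gfBB hWp hX hY hZ, dB_gfBB hWp hY hZ hX, dB_gfBB hWp hZ hX hY,
      hWp.bracket_BB Y Z hY hZ, gf_lb_lb hWp X (B.bracket Y Z),
      hWp.bracket_BB Z X hZ hX, gf_lb_lb hWp Y (B.bracket Z X),
      hWp.bracket_BB X Y hX hY, gf_lb_lb hWp Z (B.bracket X Y),
      gf_lb_lf hWp Y P, gf_lb_lb hWp X Z]
    funext pq
    simp only [Pi.smul_apply, Pi.add_apply, Pi.sub_apply, Pi.mul_apply, Pi.zero_apply,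
      smul_eq_mul]
    ring
  have h2a : Wp.Khat (SSRM.liftF P) (SSRM.liftB X) (SSRM.liftB Y) (SSRM.liftF W) = 0 := by
    unfold SSRM.Khat SSRM.K
    rw [gf_lb_lf hWp Y W, Wp.D_zero_fn hlX, gf_lf_lb hWp W X, Wp.D_zero_fn hlY,
      dF_gfBB hWp hW hX hY,
      hWp.bracket_BF Y W hY hW, gf_zero_right (SSRM.liftB X),
      br_FB hWp hW hX, gf_zero_right (SSRM.liftB Y),
      hWp.bracket_BB X Y hX hY, gf_lf_lb hWp W (B.bracket X Y),
      gf_lb_lf hWp Y P]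
    funext pq
    simp only [Pi.smul_apply, Pi.add_apply, Pi.sub_apply, Pi.mul_apply, Pi.zero_apply,
      smul_eq_mul]
    ring
  have h2b : Wp.Khat (SSRM.liftF P) (SSRM.liftF W) (SSRM.liftB X) (SSRM.liftB Y) = 0 := by
    unfold SSRM.Khat SSRM.K
    rw [dF_gfBB hWp hW hX hY, gf_lb_lf hWp Y W, Wp.D_zero_fn hlX,
      gf_lf_lb hWp W X, Wp.D_zero_fn hlY,
      hWp.bracket_BB X Y hX hY, gf_lf_lb hWp W (B.bracket X Y),
      hWp.bracket_BF Y W hY hW, gf_zero_right (SSRM.liftB X),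
      br_FB hWp hW hX, gf_zero_right (SSRM.liftB Y),
      gf_lb_lf hWp X P, gf_lf_lb hWp W Y]
    funext pq
    simp only [Pi.smul_apply, Pi.add_apply, Pi.sub_apply, Pi.mul_apply, Pi.zero_apply,
      smul_eq_mul]
    ring
  have h3 : Wp.Khat (SSRM.liftF P) (SSRM.liftB X) (SSRM.liftF W) (SSRM.liftB Y)
      = (fun pq => f pq.1 ^ 2 * B.gf X Y pq.1 * F.gf P W pq.2) := by
    unfold SSRM.Khat SSRM.K
    rw [gf_lf_lb hWp W Y, Wp.D_zero_fn hlX, dF_gfBB hWp hW hY hX,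
      gf_lb_lf hWp X W, Wp.D_zero_fn hlY,
      br_FB hWp hW hY, gf_zero_right (SSRM.liftB X),
      hWp.bracket_BB Y X hY hX, gf_lf_lb hWp W (B.bracket Y X),
      hWp.bracket_BF X W hX hW, gf_zero_right (SSRM.liftB Y),
      gf_lf_lf hWp W P, gf_lb_lb hWp X Y, gsymWP]
    funext pq
    simp only [Pi.smul_apply, Pi.add_apply, Pi.sub_apply, Pi.mul_apply, Pi.zero_apply,
      smul_eq_mul]
    ring
  have h4 : Wp.Khat (SSRM.liftF P) (SSRM.liftB X) (SSRM.liftF V) (SSRM.liftF W)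
      = (fun pq => f pq.1 * F.gf V W pq.2 * B.D X f pq.1) := by
    unfold SSRM.Khat SSRM.K
    rw [dB_gfFF hWp hX hV hW, gf_lf_lb hWp W X, Wp.D_zero_fn hlV,
      gf_lb_lf hWp X V, Wp.D_zero_fn hlW,
      hWp.bracket_FF V W hV hW, gf_lb_lf hWp X (F.bracket V W),
      br_FB hWp hW hX, gf_zero_right (SSRM.liftF V),
      hWp.bracket_BF X V hX hV, gf_zero_right (SSRM.liftF W),
      gf_lf_lf hWp V P, gf_lb_lf hWp X W]
    funext pq
    simp only [Pi.smul_apply, Pi.add_apply, Pi.sub_apply, Pi.mul_apply, Pi.zero_apply,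
      smul_eq_mul]
    ring
  have h4' : Wp.Khat (SSRM.liftF P) (SSRM.liftF V) (SSRM.liftB X) (SSRM.liftF W)
      = (fun pq => f pq.1 * F.gf V W pq.2 * B.D X f pq.1) := by
    unfold SSRM.Khat SSRM.K
    rw [gf_lb_lf hWp X W, Wp.D_zero_fn hlV, dB_gfFF hWp hX hW hV,
      gf_lf_lb hWp V X, Wp.D_zero_fn hlW,
      hWp.bracket_BF X W hX hW, gf_zero_right (SSRM.liftF V),
      hWp.bracket_FF W V hW hV, gf_lb_lf hWp X (F.bracket W V),
      br_FB hWp hV hX, gf_zero_right (SSRM.liftF W),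
      gf_lb_lf hWp X P, gsymWV]
    funext pq
    simp only [Pi.smul_apply, Pi.add_apply, Pi.sub_apply, Pi.mul_apply, Pi.zero_apply,
      smul_eq_mul]
    ring
  have h4'' : Wp.Khat (SSRM.liftF P) (SSRM.liftF V) (SSRM.liftF W) (SSRM.liftB X)
      = (fun pq => -(f pq.1 * F.gf V W pq.2 * B.D X f pq.1)) := by
    unfold SSRM.Khat SSRM.K
    rw [gf_lf_lb hWp W X, Wp.D_zero_fn hlV,
      gf_lb_lf hWp X V, Wp.D_zero_fn hlW,
      dB_gfFF hWp hX hV hW,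
      br_FB hWp hW hX, gf_zero_right (SSRM.liftF V),
      hWp.bracket_BF X V hX hV, gf_zero_right (SSRM.liftF W),
      hWp.bracket_FF V W hV hW, gf_lb_lf hWp X (F.bracket V W),
      gf_lf_lb hWp V X]
    funext pq
    simp only [Pi.smul_apply, Pi.add_apply, Pi.sub_apply, Pi.mul_apply, Pi.zero_apply,
      smul_eq_mul]
    ring
  have h5 : Wp.Khat (SSRM.liftF P) (SSRM.liftF U) (SSRM.liftF V) (SSRM.liftF W)
      = (fun pq => f pq.1 ^ 2 * F.K U V W pq.2
          + f pq.1 ^ 4 * F.gf V P pq.2 * F.gf U W pq.2) := by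
    unfold SSRM.Khat SSRM.K
    rw [dF_gfFF hWp hU hV hW, dF_gfFF hWp hV hW hU, dF_gfFF hWp hW hU hV,
      hWp.bracket_FF V W hV hW, gf_lf_lf hWp U (F.bracket V W),
      hWp.bracket_FF W U hW hU, gf_lf_lf hWp V (F.bracket W U),
      hWp.bracket_FF U V hU hV, gf_lf_lf hWp W (F.bracket U V),
      gf_lf_lf hWp V P, gf_lf_lf hWp U W]
    funext pq
    simp only [Pi.smul_apply, Pi.add_apply, Pi.sub_apply, Pi.mul_apply, Pi.zero_apply,
      smul_eq_mul]
    ring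
  refine ⟨h1, h2a, h2b, h3, h4.trans h4'.symm, ?_, h4, h5⟩
  rw [h4', h4'']
  funext pq
  simp
end
end

section
/- Let (M,g,J) be an almost product singular semi-Riemannian manifold which is radical-stationary. Then for all smooth vector fields X,Y on M, the 1-form ∇̃^♭_X Y = K̃(X,Y,·) belongs to A^•(M). -/
noncomputable section

/-- Proposition 4.6: on a radical-stationary almost product
singular semi-Riemannian manifold `(M,g,J)`, the 1-form `∇̃♭_X Y = K̃(X,Y,·)`
belongs to `A^•(M)` for all smooth vector fields `X,Y`. -/
theorem almostProduct_nablaFlatTilde_memAsup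
    {M : Type*} {T : M → Type*} [∀ p, AddCommGroup (T p)] [∀ p, Module ℝ (T p)]
    (S : SSRM M T) (J : ∀ p, T p →ₗ[ℝ] T p) (hJ : S.IsAlmostProduct J)
    (hS : S.RadicalStationary)
    (X Y : ∀ p, T p) (hX : S.IsVF X) (hY : S.IsVF Y) :
    S.MemAsup (S.nablaFlatTilde J X Y) := by
  intro p
  obtain ⟨v, hv⟩ := hS X Y hX hY p
  obtain ⟨w, hw⟩ := hS X (SSRM.Jv J Y) hX (hJ.smooth Y hY) p
  refine ⟨((1:ℝ)/2) • (v + J p w), ?_⟩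
  intro Z hZ
  have h1 := hv Z hZ
  have h2 := hw (SSRM.Jv J Z) (hJ.smooth Z hZ)
  have h3 : S.g p w (J p (Z p)) = S.g p (J p w) (Z p) := by
    rw [← hJ.compat p w (J p (Z p)), hJ.invol]
  simp only [SSRM.nablaFlatTilde, SSRM.Ktilde, Pi.smul_apply, Pi.add_apply, smul_eq_mul,
    h1, h2, SSRM.Jv] at *
  rw [h3]
  simp [map_add]
  ring
end
end

section
/- Let B×_f F be a (possibly degenerate) warped product of singular semi-Riemannian manifolds (B,g_B) and (F,g_F) with warping function f ∈ C^∞(B), equipped with the almost product structure J = (J₁,J₂) where J₁ : TB → TB and J₂ : TF → TF are almost product structures compatible with g_B and g_F respectively. Let X,Y,Z be vector fields on B and U,V,W vector fields on F (identified with their lifts). Let K̃ be the almost product Koszul form of B×_f F, K̃_B that of (B,g_B,J₁), and K̃_F that of (F,g_F,J₂). Then: (1) K̃(X,Y,Z) = K̃_B(X,Y,Z); (2) K̃(X,Y,W) = K̃(X,W,Y) = K̃(W,X,Y) = 0; (3) K̃(X,V,W) = f·g_F(V,W)·X(f); (4) K̃(V,X,W) = −K̃(V,W,X) = (1/2)[f·g_F(V,W)·X(f)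 + f·(J₁X)(f)·g_F(V,J₂W)]; (5) K̃(U,V,W) = f²·K̃_F(U,V,W). -/
noncomputable section

namespace SSRM

section Helpers

variable {MB MF : Type*} {TB : MB → Type*} {TF : MF → Type*}
  [∀ p, AddCommGroup (TB p)] [∀ p, Module ℝ (TB p)]
  [∀ q, AddCommGroup (TF q)] [∀ q, Module ℝ (TF q)]
  {B : SSRM MB TB} {F : SSRM MF TF} {f : MB → ℝ}
  {Wp : SSRM (MB × MF) fun pq => TB pq.1 × TF pq.2}

lemma gf_zero_right {M : Type*} {T : M → Type*} [∀ p, AddCommGroup (T p)]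
    [∀ p, Module ℝ (T p)] (S : SSRM M T) (A : ∀ p, T p) : S.gf A 0 = 0 := by
  funext p; simp [gf]

lemma D_zero {M : Type*} {T : M → Type*} [∀ p, AddCommGroup (T p)]
    [∀ p, Module ℝ (T p)] (S : SSRM M T) (A : ∀ p, T p) (hA : S.IsVF A) :
    S.D A 0 = 0 := S.D_const A 0 hA

lemma Jv_prod_liftB (J₁ : ∀ p, TB p →ₗ[ℝ] TB p) (J₂ : ∀ q, TF q →ₗ[ℝ] TF q)
    (X : ∀ p, TB p) :
    Jv (fun pq : MB × MF => (J₁ pq.1).prodMap (J₂ pq.2)) (liftB X)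
      = liftB (Jv J₁ X) := by
  funext pq; simp [Jv, liftB]

lemma Jv_prod_liftF (J₁ : ∀ p, TB p →ₗ[ℝ] TB p) (J₂ : ∀ q, TF q →ₗ[ℝ] TF q)
    (U : ∀ q, TF q) :
    Jv (fun pq : MB × MF => (J₁ pq.1).prodMap (J₂ pq.2)) (liftF U)
      = liftF (Jv J₂ U) := by
  funext pq; simp [Jv, liftF]


variable (hWp : IsWarpedProduct B F f Wp)
include hWp

lemma gf_BB (X Y : ∀ p, TB p) :
    Wp.gf (liftB X) (liftB Y) = fun pq => B.gf X Y pq.1 := by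
  funext pq; simp [gf, liftB, hWp.metric]

lemma gf_BF (X : ∀ p, TB p) (U : ∀ q, TF q) :
    Wp.gf (liftB X) (liftF U) = 0 := by
  funext pq; simp [gf, liftB, liftF, hWp.metric]

lemma gf_FB (U : ∀ q, TF q) (X : ∀ p, TB p) :
    Wp.gf (liftF U) (liftB X) = 0 := by
  funext pq; simp [gf, liftB, liftF, hWp.metric]

lemma gf_FF (U V : ∀ q, TF q) :
    Wp.gf (liftF U) (liftF V) = fun pq => f pq.1 ^ 2 * F.gf U V pq.2 := by
  funext pq; simp [gf, liftF, hWp.metric]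

lemma bracket_FB (U : ∀ q, TF q) (X : ∀ p, TB p) (hU : F.IsVF U) (hX : B.IsVF X) :
    Wp.bracket (liftF U) (liftB X) = 0 := by
  rw [Wp.bracket_antisymm _ _ (hWp.vf_liftF U hU) (hWp.vf_liftB X hX),
    hWp.bracket_BF X U hX hU, neg_zero]

/-- Derivative of `f² g_F(V,W)` along a lifted base field. -/
lemma D_liftB_gfFF (X : ∀ p, TB p) (V W : ∀ q, TF q)
    (hX : B.IsVF X) (hV : F.IsVF V) (hW : F.IsVF W) :
    Wp.D (liftB X) (fun pq => f pq.1 ^ 2 * F.gf V W pq.2)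
      = fun pq => 2 * f pq.1 * B.D X f pq.1 * F.gf V W pq.2 := by
  have hprod : (fun pq : MB × MF => f pq.1 ^ 2 * F.gf V W pq.2)
      = (fun pq : MB × MF => (f * f) pq.1) * fun pq => F.gf V W pq.2 := by
    funext pq; simp only [Pi.mul_apply, Pi.add_apply, Pi.sub_apply, Pi.smul_apply, Pi.zero_apply, Pi.neg_apply, Pi.one_apply, smul_eq_mul]; ring
  have hff : B.IsFn (f * f) := B.fn_mul f f hWp.smooth_f hWp.smooth_f
  have hgVW : F.IsFn (F.gf V W) := F.g_smooth V W hV hW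
  rw [hprod, Wp.D_mul_fn _ _ _ (hWp.vf_liftB X hX) (hWp.fn_liftB _ hff)
      (hWp.fn_liftF _ hgVW),
    hWp.D_liftB_fnB X _ hX hff, hWp.D_liftB_fnF X _ hX hgVW,
    B.D_mul_fn X f f hX hWp.smooth_f hWp.smooth_f]
  funext pq; simp only [Pi.mul_apply, Pi.add_apply, Pi.sub_apply, Pi.smul_apply, Pi.zero_apply, Pi.neg_apply, Pi.one_apply, smul_eq_mul]; ring

/-- Derivative of `f² g_F(V,W)` along a lifted fiber field. -/
lemma D_liftF_gfFF (U : ∀ q, TF q) (V W : ∀ q, TF q)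
    (hU : F.IsVF U) (hV : F.IsVF V) (hW : F.IsVF W) :
    Wp.D (liftF U) (fun pq => f pq.1 ^ 2 * F.gf V W pq.2)
      = fun pq => f pq.1 ^ 2 * F.D U (F.gf V W) pq.2 := by
  have hprod : (fun pq : MB × MF => f pq.1 ^ 2 * F.gf V W pq.2)
      = (fun pq : MB × MF => (f * f) pq.1) * fun pq => F.gf V W pq.2 := by
    funext pq; simp only [Pi.mul_apply, Pi.add_apply, Pi.sub_apply, Pi.smul_apply, Pi.zero_apply, Pi.neg_apply, Pi.one_apply, smul_eq_mul]; ring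
  have hff : B.IsFn (f * f) := B.fn_mul f f hWp.smooth_f hWp.smooth_f
  have hgVW : F.IsFn (F.gf V W) := F.g_smooth V W hV hW
  rw [hprod, Wp.D_mul_fn _ _ _ (hWp.vf_liftF U hU) (hWp.fn_liftB _ hff)
      (hWp.fn_liftF _ hgVW),
    hWp.D_liftF_fnB U _ hU hff, hWp.D_liftF_fnF U _ hU hgVW]
  funext pq; simp only [Pi.mul_apply, Pi.add_apply, Pi.sub_apply, Pi.smul_apply, Pi.zero_apply, Pi.neg_apply, Pi.one_apply, smul_eq_mul]; ring

lemma K_BBB (X Y Z : ∀ p, TB p) (hX : B.IsVF X) (hY : B.IsVF Y) (hZ : B.IsVF Z) :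
    Wp.K (liftB X) (liftB Y) (liftB Z) = fun pq => B.K X Y Z pq.1 := by
  unfold K
  rw [hWp.bracket_BB Y Z hY hZ, hWp.bracket_BB Z X hZ hX, hWp.bracket_BB X Y hX hY,
    gf_BB hWp Y Z, gf_BB hWp Z X, gf_BB hWp X Y,
    gf_BB hWp X (B.bracket Y Z), gf_BB hWp Y (B.bracket Z X),
    gf_BB hWp Z (B.bracket X Y),
    hWp.D_liftB_fnB X (B.gf Y Z) hX (B.g_smooth Y Z hY hZ),
    hWp.D_liftB_fnB Y (B.gf Z X) hY (B.g_smooth Z X hZ hX),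
    hWp.D_liftB_fnB Z (B.gf X Y) hZ (B.g_smooth X Y hX hY)]
  funext pq; simp [Pi.smul_apply, Pi.add_apply, Pi.sub_apply]

lemma K_BBF (X Y : ∀ p, TB p) (W : ∀ q, TF q)
    (hX : B.IsVF X) (hY : B.IsVF Y) (hW : F.IsVF W) :
    Wp.K (liftB X) (liftB Y) (liftF W) = 0 := by
  unfold K
  rw [hWp.bracket_BF Y W hY hW, bracket_FB hWp W X hW hX, hWp.bracket_BB X Y hX hY,
    gf_BF hWp Y W, gf_FB hWp W X, gf_BB hWp X Y,
    gf_zero_right, gf_zero_right, gf_FB hWp W (B.bracket X Y),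
    D_zero Wp _ (hWp.vf_liftB X hX), D_zero Wp _ (hWp.vf_liftB Y hY),
    hWp.D_liftF_fnB W (B.gf X Y) hW (B.g_smooth X Y hX hY)]
  funext pq; simp

lemma K_BFB (X Y : ∀ p, TB p) (W : ∀ q, TF q)
    (hX : B.IsVF X) (hY : B.IsVF Y) (hW : F.IsVF W) :
    Wp.K (liftB X) (liftF W) (liftB Y) = 0 := by
  unfold K
  rw [bracket_FB hWp W Y hW hY, hWp.bracket_BB Y X hY hX, hWp.bracket_BF X W hX hW,
    gf_FB hWp W Y, gf_BB hWp Y X, gf_BF hWp X W,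
    gf_zero_right, gf_FB hWp W (B.bracket Y X), gf_zero_right,
    D_zero Wp _ (hWp.vf_liftB X hX), D_zero Wp _ (hWp.vf_liftB Y hY),
    hWp.D_liftF_fnB W (B.gf Y X) hW (B.g_smooth Y X hY hX)]
  funext pq; simp

lemma K_FBB (X Y : ∀ p, TB p) (W : ∀ q, TF q)
    (hX : B.IsVF X) (hY : B.IsVF Y) (hW : F.IsVF W) :
    Wp.K (liftF W) (liftB X) (liftB Y) = 0 := by
  unfold K
  rw [hWp.bracket_BB X Y hX hY, bracket_FB hWp W X hW hX,
    hWp.bracket_BF Y W hY hW,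
    gf_BB hWp X Y, gf_FB hWp W X, gf_BF hWp Y W,
    gf_FB hWp W (B.bracket X Y), gf_zero_right, gf_zero_right,
    D_zero Wp _ (hWp.vf_liftB Y hY), D_zero Wp _ (hWp.vf_liftB X hX),
    hWp.D_liftF_fnB W (B.gf X Y) hW (B.g_smooth X Y hX hY)]
  funext pq; simp

lemma K_BFF (X : ∀ p, TB p) (V W : ∀ q, TF q)
    (hX : B.IsVF X) (hV : F.IsVF V) (hW : F.IsVF W) :
    Wp.K (liftB X) (liftF V) (liftF W)
      = fun pq => f pq.1 * F.gf V W pq.2 * B.D X f pq.1 := by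
  unfold K
  rw [hWp.bracket_FF V W hV hW, bracket_FB hWp W X hW hX,
    hWp.bracket_BF X V hX hV,
    gf_FF hWp V W, gf_FB hWp W X, gf_BF hWp X V,
    gf_BF hWp X (F.bracket V W), gf_zero_right, gf_zero_right,
    D_zero Wp _ (hWp.vf_liftF V hV), D_zero Wp _ (hWp.vf_liftF W hW),
    D_liftB_gfFF hWp X V W hX hV hW]
  funext pq; simp only [Pi.mul_apply, Pi.add_apply, Pi.sub_apply, Pi.smul_apply, Pi.zero_apply, Pi.neg_apply, Pi.one_apply, smul_eq_mul]; ring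

lemma K_FBF (X : ∀ p, TB p) (V W : ∀ q, TF q)
    (hX : B.IsVF X) (hV : F.IsVF V) (hW : F.IsVF W) :
    Wp.K (liftF V) (liftB X) (liftF W)
      = fun pq => f pq.1 * F.gf V W pq.2 * B.D X f pq.1 := by
  unfold K
  rw [hWp.bracket_BF X W hX hW, hWp.bracket_FF W V hW hV,
    bracket_FB hWp V X hV hX,
    gf_BF hWp X W, gf_FF hWp W V, gf_FB hWp V X,
    gf_zero_right, gf_BF hWp X (F.bracket W V), gf_zero_right,
    D_zero Wp _ (hWp.vf_liftF V hV), D_zero Wp _ (hWp.vf_liftF W hW),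
    D_liftB_gfFF hWp X W V hX hW hV]
  have hsym : F.gf W V = F.gf V W := by funext q; exact F.g_symm q _ _
  rw [hsym]
  funext pq; simp only [Pi.mul_apply, Pi.add_apply, Pi.sub_apply, Pi.smul_apply, Pi.zero_apply, Pi.neg_apply, Pi.one_apply, smul_eq_mul]; ring

lemma K_FFB (X : ∀ p, TB p) (V W : ∀ q, TF q)
    (hX : B.IsVF X) (hV : F.IsVF V) (hW : F.IsVF W) :
    Wp.K (liftF V) (liftF W) (liftB X)
      = fun pq => -(f pq.1 * F.gf V W pq.2 * B.D X f pq.1) := by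
  unfold K
  rw [bracket_FB hWp W X hW hX, hWp.bracket_BF X V hX hV,
    hWp.bracket_FF V W hV hW,
    gf_FB hWp W X, gf_BF hWp X V, gf_FF hWp V W,
    gf_zero_right, gf_zero_right, gf_BF hWp X (F.bracket V W),
    D_zero Wp _ (hWp.vf_liftF V hV), D_zero Wp _ (hWp.vf_liftF W hW),
    D_liftB_gfFF hWp X V W hX hV hW]
  funext pq; simp only [Pi.mul_apply, Pi.add_apply, Pi.sub_apply, Pi.smul_apply, Pi.zero_apply, Pi.neg_apply, Pi.one_apply, smul_eq_mul]; ring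

lemma K_FFF (U V W : ∀ q, TF q)
    (hU : F.IsVF U) (hV : F.IsVF V) (hW : F.IsVF W) :
    Wp.K (liftF U) (liftF V) (liftF W)
      = fun pq => f pq.1 ^ 2 * F.K U V W pq.2 := by
  unfold K
  rw [hWp.bracket_FF V W hV hW, hWp.bracket_FF W U hW hU, hWp.bracket_FF U V hU hV,
    gf_FF hWp V W, gf_FF hWp W U, gf_FF hWp U V,
    gf_FF hWp U (F.bracket V W), gf_FF hWp V (F.bracket W U),
    gf_FF hWp W (F.bracket U V),
    D_liftF_gfFF hWp U V W hU hV hW, D_liftF_gfFF hWp V W U hV hW hU,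
    D_liftF_gfFF hWp W U V hW hU hV]
  funext pq; simp only [Pi.mul_apply, Pi.add_apply, Pi.sub_apply, Pi.smul_apply, Pi.zero_apply, Pi.neg_apply, Pi.one_apply, smul_eq_mul]; ring

end Helpers

end SSRM

/-- Proposition 4.14: the almost product Koszul form of a
(possibly degenerate) warped product `B ×_f F` equipped with the almost product
structure `J = (J₁,J₂)`, on lifts of vector fields `X,Y,Z ∈ Γ(TB)` and
`U,V,W ∈ Γ(TF)`, in terms of the data on the factors. -/
theorem almostProductKoszul_warpedProduct
    {MB MF : Type*} {TB : MB → Type*} {TF : MF → Type*}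
    [∀ p, AddCommGroup (TB p)] [∀ p, Module ℝ (TB p)]
    [∀ q, AddCommGroup (TF q)] [∀ q, Module ℝ (TF q)]
    (B : SSRM MB TB) (F : SSRM MF TF) (f : MB → ℝ)
    (Wp : SSRM (MB × MF) fun pq => TB pq.1 × TF pq.2)
    (hWp : SSRM.IsWarpedProduct B F f Wp)
    (J₁ : ∀ p, TB p →ₗ[ℝ] TB p) (hJ₁ : B.IsAlmostProduct J₁)
    (J₂ : ∀ q, TF q →ₗ[ℝ] TF q) (hJ₂ : F.IsAlmostProduct J₂)
    (X Y Z : ∀ p, TB p) (hX : B.IsVF X) (hY : B.IsVF Y) (hZ : B.IsVF Z)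
    (U V W : ∀ q, TF q) (hU : F.IsVF U) (hV : F.IsVF V) (hW : F.IsVF W) :
    -- (1) `K̃(X,Y,Z) = K̃_B(X,Y,Z)`
    Wp.Ktilde (fun pq => (J₁ pq.1).prodMap (J₂ pq.2))
        (SSRM.liftB X) (SSRM.liftB Y) (SSRM.liftB Z)
      = (fun pq => B.Ktilde J₁ X Y Z pq.1) ∧
    -- (2) `K̃(X,Y,W) = K̃(X,W,Y) = K̃(W,X,Y) = 0`
    Wp.Ktilde (fun pq => (J₁ pq.1).prodMap (J₂ pq.2))
        (SSRM.liftB X) (SSRM.liftB Y) (SSRM.liftF W) = 0 ∧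
    Wp.Ktilde (fun pq => (J₁ pq.1).prodMap (J₂ pq.2))
        (SSRM.liftB X) (SSRM.liftF W) (SSRM.liftB Y) = 0 ∧
    Wp.Ktilde (fun pq => (J₁ pq.1).prodMap (J₂ pq.2))
        (SSRM.liftF W) (SSRM.liftB X) (SSRM.liftB Y) = 0 ∧
    -- (3) `K̃(X,V,W) = f·g_F(V,W)·X(f)`
    Wp.Ktilde (fun pq => (J₁ pq.1).prodMap (J₂ pq.2))
        (SSRM.liftB X) (SSRM.liftF V) (SSRM.liftF W)
      = (fun pq => f pq.1 * F.gf V W pq.2 * B.D X f pq.1) ∧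
    -- (4) `K̃(V,X,W) = −K̃(V,W,X) = (1/2)[f·g_F(V,W)·X(f) + f·(J₁X)(f)·g_F(V,J₂W)]`
    Wp.Ktilde (fun pq => (J₁ pq.1).prodMap (J₂ pq.2))
        (SSRM.liftF V) (SSRM.liftB X) (SSRM.liftF W)
      = -Wp.Ktilde (fun pq => (J₁ pq.1).prodMap (J₂ pq.2))
          (SSRM.liftF V) (SSRM.liftF W) (SSRM.liftB X) ∧
    Wp.Ktilde (fun pq => (J₁ pq.1).prodMap (J₂ pq.2))
        (SSRM.liftF V) (SSRM.liftB X) (SSRM.liftF W)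
      = (fun pq => (1 : ℝ) / 2 * (f pq.1 * F.gf V W pq.2 * B.D X f pq.1
          + f pq.1 * B.D (SSRM.Jv J₁ X) f pq.1 * F.gf V (SSRM.Jv J₂ W) pq.2)) ∧
    -- (5) `K̃(U,V,W) = f²·K̃_F(U,V,W)`
    Wp.Ktilde (fun pq => (J₁ pq.1).prodMap (J₂ pq.2))
        (SSRM.liftF U) (SSRM.liftF V) (SSRM.liftF W)
      = (fun pq => f pq.1 ^ 2 * F.Ktilde J₂ U V W pq.2) := by
  have hJX := hJ₁.smooth X hX
  have hJY := hJ₁.smooth Y hY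
  have hJZ := hJ₁.smooth Z hZ
  have hJU := hJ₂.smooth U hU
  have hJV := hJ₂.smooth V hV
  have hJW := hJ₂.smooth W hW
  refine ⟨?_, ?_, ?_, ?_, ?_, ?_, ?_, ?_⟩
  · unfold SSRM.Ktilde
    rw [SSRM.Jv_prod_liftB, SSRM.Jv_prod_liftB,
      SSRM.K_BBB hWp X Y Z hX hY hZ, SSRM.K_BBB hWp X _ _ hX hJY hJZ]
    funext pq; simp
  · unfold SSRM.Ktilde
    rw [SSRM.Jv_prod_liftB, SSRM.Jv_prod_liftF,
      SSRM.K_BBF hWp X Y W hX hY hW, SSRM.K_BBF hWp X _ _ hX hJY hJW]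
    funext pq; simp
  · unfold SSRM.Ktilde
    rw [SSRM.Jv_prod_liftF, SSRM.Jv_prod_liftB,
      SSRM.K_BFB hWp X Y W hX hY hW, SSRM.K_BFB hWp X _ _ hX hJY hJW]
    funext pq; simp
  · unfold SSRM.Ktilde
    rw [SSRM.Jv_prod_liftB, SSRM.Jv_prod_liftB,
      SSRM.K_FBB hWp X Y W hX hY hW, SSRM.K_FBB hWp _ _ W hJX hJY hW]
    funext pq; simp
  · unfold SSRM.Ktilde
    rw [SSRM.Jv_prod_liftF, SSRM.Jv_prod_liftF,
      SSRM.K_BFF hWp X V W hX hV hW, SSRM.K_BFF hWp X _ _ hX hJV hJW]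
    have hc : F.gf (SSRM.Jv J₂ V) (SSRM.Jv J₂ W) = F.gf V W := by
      funext q; exact hJ₂.compat q _ _
    rw [hc]
    funext pq; simp only [Pi.mul_apply, Pi.add_apply, Pi.sub_apply, Pi.smul_apply, Pi.zero_apply, Pi.neg_apply, Pi.one_apply, smul_eq_mul]; ring
  · unfold SSRM.Ktilde
    rw [SSRM.Jv_prod_liftB, SSRM.Jv_prod_liftF,
      SSRM.K_FBF hWp X V W hX hV hW, SSRM.K_FBF hWp _ V _ hJX hV hJW,
      SSRM.K_FFB hWp X V W hX hV hW, SSRM.K_FFB hWp _ V _ hJX hV hJW]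
    funext pq; simp only [Pi.mul_apply, Pi.add_apply, Pi.sub_apply, Pi.smul_apply, Pi.zero_apply, Pi.neg_apply, Pi.one_apply, smul_eq_mul]; ring
  · unfold SSRM.Ktilde
    rw [SSRM.Jv_prod_liftB, SSRM.Jv_prod_liftF,
      SSRM.K_FBF hWp X V W hX hV hW, SSRM.K_FBF hWp _ V _ hJX hV hJW]
    funext pq; simp only [Pi.mul_apply, Pi.add_apply, Pi.sub_apply, Pi.smul_apply, Pi.zero_apply, Pi.neg_apply, Pi.one_apply, smul_eq_mul]; ring
  · unfold SSRM.Ktilde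
    rw [SSRM.Jv_prod_liftF, SSRM.Jv_prod_liftF,
      SSRM.K_FFF hWp U V W hU hV hW, SSRM.K_FFF hWp U _ _ hU hJV hJW]
    funext pq; simp only [Pi.mul_apply, Pi.add_apply, Pi.sub_apply, Pi.smul_apply, Pi.zero_apply, Pi.neg_apply, Pi.one_apply, smul_eq_mul]; ring
end
end
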